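/- arXiv:2106.15418 — 5 statements merged into one kernel-verified Lean document; each statement's English description precedes it below -/
import Mathlib

section
/- The skew-symmetric bilinear form Omega on R^{2n} defined by Omega(x,y) = sum_{i=1}^n (x_i y_{ĩ} - x_{ĩ} y_i) + sum_{j=1}^{n-1} (x_{j+1} y_{j̃} - x_{j̃} y_{j+1}) + (-1)^n (x_1 y_{ñ} - x_{ñ} y_1) has a two-dimensional kernel spanned by the vectors (0,1,0,-1,...,0,(-1)^{n-1}) and (1,0,-1,0,...,(-1)^{n-1},0). -/
/-- The unmarked coordinate `x_{i+1}` (0-based `i`) of a vector in ℝ^{2n}: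
coordinates are listed in the order 1, 1̃, 2, 2̃, …, n, ñ. -/
def unmCoord {n : ℕ} (x : Fin (2 * n) → ℝ) (i : ℕ) : ℝ :=
  if h : 2 * i < 2 * n then x ⟨2 * i, h⟩ else 0

/-- The tilde coordinate `x_{(i+1)~}` (0-based `i`) of a vector in ℝ^{2n}. -/
def tldCoord {n : ℕ} (x : Fin (2 * n) → ℝ) (i : ℕ) : ℝ :=
  if h : 2 * i + 1 < 2 * n then x ⟨2 * i + 1, h⟩ else 0

/-- The skew-symmetric bilinear form Ω on ℝ^{2n}. -/
def Omega (n : ℕ) (x y : Fin (2 * n) → ℝ) : ℝ :=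
  (∑ i ∈ Finset.range n,
      (unmCoord x i * tldCoord y i - tldCoord x i * unmCoord y i)) +
  (∑ j ∈ Finset.range (n - 1),
      (unmCoord x (j + 1) * tldCoord y j - tldCoord x j * unmCoord y (j + 1))) +
  (-1 : ℝ) ^ n *
      (unmCoord x 0 * tldCoord y (n - 1) - tldCoord x (n - 1) * unmCoord y 0)

/-- The skew-symmetric bilinear form Ω^D on ℝ^{2n}, with cyclic indices mod n. -/
def OmegaD (n : ℕ) (x y : Fin (2 * n) → ℝ) : ℝ :=
  (∑ i ∈ Finset.range n,
      (unmCoord x i * tldCoord y i - tldCoord x i * unmCoord y i)) +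
  (∑ j ∈ Finset.range n,
      (tldCoord x j * unmCoord y ((j + 1) % n) -
        unmCoord x ((j + 1) % n) * tldCoord y j))

section Aux

variable {n : ℕ}

lemma unm_single_odd (j : ℕ) (h : 2 * j + 1 < 2 * n) (i : ℕ) :
    unmCoord (Pi.single (⟨2 * j + 1, h⟩ : Fin (2 * n)) (1 : ℝ)) i = 0 := by
  unfold unmCoord
  split
  · exact Pi.single_eq_of_ne (by simp [Fin.ext_iff]; omega) 1
  · rfl

lemma tld_single_odd (j : ℕ) (h : 2 * j + 1 < 2 * n) (i : ℕ) :
    tldCoord (Pi.single (⟨2 * j + 1, h⟩ : Fin (2 * n)) (1 : ℝ)) i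
      = if i = j then 1 else 0 := by
  unfold tldCoord
  split
  · rcases eq_or_ne i j with rfl | hij
    · simp
    · rw [if_neg hij]
      exact Pi.single_eq_of_ne (by simp [Fin.ext_iff]; omega) 1
  · rw [if_neg (by omega)]

lemma unm_single_even (j : ℕ) (h : 2 * j < 2 * n) (i : ℕ) :
    unmCoord (Pi.single (⟨2 * j, h⟩ : Fin (2 * n)) (1 : ℝ)) i
      = if i = j then 1 else 0 := by
  unfold unmCoord
  split
  · rcases eq_or_ne i j with rfl | hij
    · simp
    · rw [if_neg hij]
      exact Pi.single_eq_of_ne (by simp [Fin.ext_iff]; omega) 1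
  · rw [if_neg (by omega)]

lemma tld_single_even (j : ℕ) (h : 2 * j < 2 * n) (i : ℕ) :
    tldCoord (Pi.single (⟨2 * j, h⟩ : Fin (2 * n)) (1 : ℝ)) i = 0 := by
  unfold tldCoord
  split
  · exact Pi.single_eq_of_ne (by simp [Fin.ext_iff]; omega) 1
  · rfl

lemma kernel_unm_rec (v : Fin (2 * n) → ℝ) (hv : ∀ w, Omega n v w = 0)
    (j : ℕ) (hj : j + 1 < n) :
    unmCoord v (j + 1) = - unmCoord v j := by
  have h2 : 2 * j + 1 < 2 * n := by omega
  have := hv (Pi.single (⟨2 * j + 1, h2⟩ : Fin (2 * n)) (1 : ℝ))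
  simp only [Omega, unm_single_odd, tld_single_odd, mul_ite, mul_one, mul_zero,
    sub_zero, zero_sub, mul_neg, neg_zero, Finset.sum_ite_eq', Finset.mem_range] at this
  rw [if_pos (by omega), if_pos (by omega), if_neg (by omega)] at this
  linarith

lemma kernel_tld_rec (v : Fin (2 * n) → ℝ) (hv : ∀ w, Omega n v w = 0)
    (j : ℕ) (hj : j + 1 < n) :
    tldCoord v (j + 1) = - tldCoord v j := by
  have h2 : 2 * (j + 1) < 2 * n := by omega
  have := hv (Pi.single (⟨2 * (j + 1), h2⟩ : Fin (2 * n)) (1 : ℝ))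
  simp only [Omega, unm_single_even, tld_single_even, mul_ite, mul_one, mul_zero,
    sub_zero, zero_sub, mul_neg, neg_zero, add_left_inj, Finset.sum_neg_distrib,
    Finset.sum_ite_eq', Finset.mem_range] at this
  rw [if_pos (by omega), if_pos (by omega), if_neg (by omega)] at this
  linarith

lemma alt_of_rec (m : ℕ) (f : ℕ → ℝ) (h : ∀ j, j + 1 < m → f (j + 1) = - f j) :
    ∀ i, i < m → f i = (-1) ^ i * f 0 := by
  intro i
  induction i with
  | zero => simp
  | succ k ih =>
      intro hk
      rw [h k hk, ih (by omega)]
      ring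

lemma unm_comb (a b : ℝ) (x y : Fin (2 * n) → ℝ) (i : ℕ) :
    unmCoord (a • x + b • y) i = a * unmCoord x i + b * unmCoord y i := by
  unfold unmCoord; split <;> simp

lemma tld_comb (a b : ℝ) (x y : Fin (2 * n) → ℝ) (i : ℕ) :
    tldCoord (a • x + b • y) i = a * tldCoord x i + b * tldCoord y i := by
  unfold tldCoord; split <;> simp

lemma Omega_comb (a b : ℝ) (x y w : Fin (2 * n) → ℝ) :
    Omega n (a • x + b • y) w = a * Omega n x w + b * Omega n y w := by
  simp only [Omega, unm_comb, tld_comb]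
  have h1 : (∑ i ∈ Finset.range n,
      ((a * unmCoord x i + b * unmCoord y i) * tldCoord w i -
        (a * tldCoord x i + b * tldCoord y i) * unmCoord w i)) =
      a * (∑ i ∈ Finset.range n,
        (unmCoord x i * tldCoord w i - tldCoord x i * unmCoord w i)) +
      b * (∑ i ∈ Finset.range n,
        (unmCoord y i * tldCoord w i - tldCoord y i * unmCoord w i)) := by
    rw [Finset.mul_sum, Finset.mul_sum, ← Finset.sum_add_distrib]
    exact Finset.sum_congr rfl fun i _ => by ring
  have h2 : (∑ j ∈ Finset.range (n - 1),
      ((a * unmCoord x (j + 1) + b * unmCoord y (j + 1)) * tldCoord w j -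
        (a * tldCoord x j + b * tldCoord y j) * unmCoord w (j + 1))) =
      a * (∑ j ∈ Finset.range (n - 1),
        (unmCoord x (j + 1) * tldCoord w j - tldCoord x j * unmCoord w (j + 1))) +
      b * (∑ j ∈ Finset.range (n - 1),
        (unmCoord y (j + 1) * tldCoord w j - tldCoord y j * unmCoord w (j + 1))) := by
    rw [Finset.mul_sum, Finset.mul_sum, ← Finset.sum_add_distrib]
    exact Finset.sum_congr rfl fun j _ => by ring
  rw [h1, h2]; ring

lemma unm_v1 (i : ℕ) :
    unmCoord (fun k : Fin (2 * n) =>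
      if (k : ℕ) % 2 = 1 then (-1 : ℝ) ^ ((k : ℕ) / 2) else 0) i = 0 := by
  unfold unmCoord
  split
  · simp [Nat.mul_mod_right]
  · rfl

lemma tld_v1 (i : ℕ) (h : i < n) :
    tldCoord (fun k : Fin (2 * n) =>
      if (k : ℕ) % 2 = 1 then (-1 : ℝ) ^ ((k : ℕ) / 2) else 0) i = (-1) ^ i := by
  have h2 : 2 * i + 1 < 2 * n := by omega
  unfold tldCoord
  rw [dif_pos h2]
  simp [Nat.mul_add_mod, Nat.mul_add_div]

lemma unm_v2 (i : ℕ) (h : i < n) :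
    unmCoord (fun k : Fin (2 * n) =>
      if (k : ℕ) % 2 = 0 then (-1 : ℝ) ^ ((k : ℕ) / 2) else 0) i = (-1) ^ i := by
  have h2 : 2 * i < 2 * n := by omega
  unfold unmCoord
  rw [dif_pos h2]
  simp [Nat.mul_mod_right, Nat.mul_div_cancel_left]

lemma tld_v2 (i : ℕ) :
    tldCoord (fun k : Fin (2 * n) =>
      if (k : ℕ) % 2 = 0 then (-1 : ℝ) ^ ((k : ℕ) / 2) else 0) i = 0 := by
  unfold tldCoord
  split
  · simp [Nat.mul_add_mod]
  · rfl

lemma Omega_v1 (hn : 2 ≤ n) (w : Fin (2 * n) → ℝ) :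
    Omega n (fun k : Fin (2 * n) =>
      if (k : ℕ) % 2 = 1 then (-1 : ℝ) ^ ((k : ℕ) / 2) else 0) w = 0 := by
  obtain ⟨m, rfl⟩ : ∃ m, n = m + 1 := ⟨n - 1, by omega⟩
  set V : Fin (2 * (m + 1)) → ℝ :=
    fun k => if (k : ℕ) % 2 = 1 then (-1 : ℝ) ^ ((k : ℕ) / 2) else 0 with hV
  unfold Omega
  have e1 : ∑ i ∈ Finset.range (m + 1),
      (unmCoord V i * tldCoord w i - tldCoord V i * unmCoord w i)
      = -∑ i ∈ Finset.range (m + 1), (-1 : ℝ) ^ i * unmCoord w i := by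
    rw [← Finset.sum_neg_distrib]
    refine Finset.sum_congr rfl fun i hi => ?_
    rw [hV, unm_v1, tld_v1 i (Finset.mem_range.mp hi)]; ring
  have e2 : ∑ j ∈ Finset.range (m + 1 - 1),
      (unmCoord V (j + 1) * tldCoord w j - tldCoord V j * unmCoord w (j + 1))
      = -∑ j ∈ Finset.range m, (-1 : ℝ) ^ j * unmCoord w (j + 1) := by
    rw [Nat.add_sub_cancel, ← Finset.sum_neg_distrib]
    refine Finset.sum_congr rfl fun j hj => ?_
    rw [hV, unm_v1, tld_v1 j (by have := Finset.mem_range.mp hj; omega)]; ring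
  have e3 : unmCoord V 0 = 0 := unm_v1 0
  have e4 : tldCoord V (m + 1 - 1) = (-1 : ℝ) ^ m := by
    rw [Nat.add_sub_cancel]; exact tld_v1 m (by omega)
  rw [e1, e2, e3, e4,
    Finset.sum_range_succ' (fun i => (-1 : ℝ) ^ i * unmCoord w i) m]
  have hs : ∑ i ∈ Finset.range m, (-1 : ℝ) ^ (i + 1) * unmCoord w (i + 1)
      = - ∑ j ∈ Finset.range m, (-1 : ℝ) ^ j * unmCoord w (j + 1) := by
    rw [← Finset.sum_neg_distrib]
    exact Finset.sum_congr rfl fun i _ => by ring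
  rw [hs]
  have hB : ((-1 : ℝ)) ^ (m + 1) * ((-1 : ℝ)) ^ m = -1 :=
    (pow_add (-1 : ℝ) (m + 1) m ▸ Odd.neg_one_pow ⟨m, by ring⟩)
  linear_combination (-unmCoord w 0) * hB

lemma Omega_v2 (hn : 2 ≤ n) (w : Fin (2 * n) → ℝ) :
    Omega n (fun k : Fin (2 * n) =>
      if (k : ℕ) % 2 = 0 then (-1 : ℝ) ^ ((k : ℕ) / 2) else 0) w = 0 := by
  obtain ⟨m, rfl⟩ : ∃ m, n = m + 1 := ⟨n - 1, by omega⟩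
  set V : Fin (2 * (m + 1)) → ℝ :=
    fun k => if (k : ℕ) % 2 = 0 then (-1 : ℝ) ^ ((k : ℕ) / 2) else 0 with hV
  unfold Omega
  have e1 : ∑ i ∈ Finset.range (m + 1),
      (unmCoord V i * tldCoord w i - tldCoord V i * unmCoord w i)
      = ∑ i ∈ Finset.range (m + 1), (-1 : ℝ) ^ i * tldCoord w i := by
    refine Finset.sum_congr rfl fun i hi => ?_
    rw [hV, tld_v2, unm_v2 i (Finset.mem_range.mp hi)]; ring
  have e2 : ∑ j ∈ Finset.range (m + 1 - 1),
      (unmCoord V (j + 1) * tldCoord w j - tldCoord V j * unmCoord w (j + 1))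
      = -∑ j ∈ Finset.range m, (-1 : ℝ) ^ j * tldCoord w j := by
    rw [Nat.add_sub_cancel, ← Finset.sum_neg_distrib]
    refine Finset.sum_congr rfl fun j hj => ?_
    rw [hV, tld_v2, unm_v2 (j + 1) (by have := Finset.mem_range.mp hj; omega)]
    ring
  have e3 : unmCoord V 0 = 1 := by
    have := unm_v2 (n := m + 1) 0 (by omega); simpa using this
  have e4 : tldCoord V (m + 1 - 1) = 0 := tld_v2 _
  rw [e1, e2, e3, e4,
    Finset.sum_range_succ (fun i => (-1 : ℝ) ^ i * tldCoord w i) m,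
    Nat.add_sub_cancel, pow_succ]
  ring

end Aux

/-- The kernel of Ω is two-dimensional, spanned by (0,1,0,-1,…,0,(-1)^{n-1}) and
(1,0,-1,0,…,(-1)^{n-1},0). -/
theorem omega_kernel (n : ℕ) (hn : 2 ≤ n)
    (v₁ v₂ : Fin (2 * n) → ℝ)
    (hv₁ : v₁ = fun k : Fin (2 * n) => if (k : ℕ) % 2 = 1 then (-1 : ℝ) ^ ((k : ℕ) / 2) else 0)
    (hv₂ : v₂ = fun k : Fin (2 * n) => if (k : ℕ) % 2 = 0 then (-1 : ℝ) ^ ((k : ℕ) / 2) else 0) :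
    {v : Fin (2 * n) → ℝ | ∀ w, Omega n v w = 0} =
      (Submodule.span ℝ {v₁, v₂} : Set (Fin (2 * n) → ℝ)) := by
  subst hv₁ hv₂
  ext v
  simp only [Set.mem_setOf_eq, SetLike.mem_coe, Submodule.mem_span_pair]
  constructor
  · intro hv
    have hu := alt_of_rec n (unmCoord v) (kernel_unm_rec v hv)
    have ht := alt_of_rec n (tldCoord v) (kernel_tld_rec v hv)
    refine ⟨tldCoord v 0, unmCoord v 0, ?_⟩
    funext k
    have hk2 : (k : ℕ) < 2 * n := k.isLt
    simp only [Pi.add_apply, Pi.smul_apply, smul_eq_mul]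
    rcases Nat.even_or_odd (k : ℕ) with hk | hk
    · rw [Nat.even_iff] at hk
      have hlt : (k : ℕ) / 2 < n := by omega
      rw [if_neg (by omega), if_pos hk]
      have hvk : v k = unmCoord v ((k : ℕ) / 2) := by
        unfold unmCoord
        rw [dif_pos (by omega)]
        congr 1
        exact Fin.ext (by simp; omega)
      rw [hvk, hu _ hlt]
      ring
    · rw [Nat.odd_iff] at hk
      have hlt : (k : ℕ) / 2 < n := by omega
      rw [if_pos hk, if_neg (by omega)]
      have hvk : v k = tldCoord v ((k : ℕ) / 2) := by
        unfold tldCoord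
        rw [dif_pos (by omega)]
        congr 1
        exact Fin.ext (by simp; omega)
      rw [hvk, ht _ hlt]
      ring
  · rintro ⟨a, b, rfl⟩ w
    rw [Omega_comb, Omega_v1 hn, Omega_v2 hn]
    ring
end

section
/- Let v_1,...,v_{n+1} be vectors in R^{2n} with v_1 ∧ ... ∧ v_{n+1} ≠ 0. Then kappa(v_1 ∧ ... ∧ v_{n+1}) = 0 if and only if span(v_1,...,v_{n+1}) is isotropic with respect to Omega. -/
/-- The family obtained from v : Fin (n+1) → V by omitting the entries at
positions p < q, reindexed by Fin (n-1). -/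
def erase2 {α : Type*} {n : ℕ} (v : Fin (n + 1) → α) (p q : Fin (n + 1)) :
    Fin (n - 1) → α :=
  fun i => v ⟨(if (i : ℕ) < (p : ℕ) then (i : ℕ)
      else if (i : ℕ) + 1 < (q : ℕ) then (i : ℕ) + 1 else (i : ℕ) + 2) % (n + 1),
    Nat.mod_lt _ (Nat.succ_pos n)⟩

/-- The value of the map κ : Λ^{n+1}(V) → Λ^{n-1}(V) induced by a bilinear form
Ω on a simple tensor v₁ ∧ … ∧ v_{n+1}:
∑_{p<q} (-1)^{p+q-1} Ω(v_p, v_q) · v₁ ∧ … ∧ v̂_p ∧ … ∧ v̂_q ∧ … ∧ v_{n+1}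
(with 1-based p, q as in the paper; here indices are 0-based). -/
noncomputable def kappaSimple {n : ℕ} (V : Type*) [AddCommGroup V] [Module ℝ V]
    (Ω : V → V → ℝ) (v : Fin (n + 1) → V) : ExteriorAlgebra ℝ V :=
  ∑ p : Fin (n + 1), ∑ q : Fin (n + 1),
    if (p : ℕ) < (q : ℕ) then
      ((-1 : ℝ) ^ ((p : ℕ) + (q : ℕ) + 1) * Ω (v p) (v q)) •
        ExteriorAlgebra.ιMulti ℝ (n - 1) (erase2 v p q)
    else 0

lemma erase2_id_val {n : ℕ} (p q : Fin (n+1)) (i : Fin (n-1)) :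
    ((erase2 (id : Fin (n+1) → Fin (n+1)) p q i : Fin (n+1)) : ℕ) =
      if (i:ℕ) < (p:ℕ) then (i:ℕ) else if (i:ℕ)+1 < (q:ℕ) then (i:ℕ)+1 else (i:ℕ)+2 := by
  have hi := i.isLt
  simp only [erase2, id]
  exact Nat.mod_eq_of_lt (by split_ifs <;> omega)

lemma erase2_eq_comp {α : Type*} {n : ℕ} (v : Fin (n+1) → α) (p q : Fin (n+1)) :
    erase2 v p q = fun i => v (erase2 (id : Fin (n+1) → Fin (n+1)) p q i) := rfl

lemma erase2_id_injective {n : ℕ} {p q : Fin (n+1)} (hpq : (p:ℕ) < (q:ℕ)) :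
    Function.Injective (erase2 (id : Fin (n+1) → Fin (n+1)) p q) := by
  intro i j h
  have hi := i.isLt; have hj := j.isLt; have hq := q.isLt
  have h2 := congrArg Fin.val h
  rw [erase2_id_val, erase2_id_val] at h2
  apply Fin.ext
  split_ifs at h2 <;> omega

lemma erase2_id_ne {n : ℕ} {p q : Fin (n+1)} (hpq : (p:ℕ) < (q:ℕ)) (i : Fin (n-1)) :
    erase2 (id : Fin (n+1) → Fin (n+1)) p q i ≠ p ∧
      erase2 (id : Fin (n+1) → Fin (n+1)) p q i ≠ q := by
  have hi := i.isLt; have hq := q.isLt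
  constructor <;>
    (intro h; have h2 := congrArg Fin.val h; rw [erase2_id_val] at h2;
     split_ifs at h2 <;> omega)

lemma erase2_id_exists {n : ℕ} {p q : Fin (n+1)} (hpq : (p:ℕ) < (q:ℕ)) (r : Fin (n+1))
    (hrp : r ≠ p) (hrq : r ≠ q) :
    ∃ i : Fin (n-1), erase2 (id : Fin (n+1) → Fin (n+1)) p q i = r := by
  have hq := q.isLt; have hr := r.isLt
  have hrp' : (r:ℕ) ≠ (p:ℕ) := fun h => hrp (Fin.ext h)
  have hrq' : (r:ℕ) ≠ (q:ℕ) := fun h => hrq (Fin.ext h)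
  refine ⟨⟨if (r:ℕ) < (p:ℕ) then (r:ℕ) else if (r:ℕ) < (q:ℕ) then (r:ℕ) - 1 else (r:ℕ) - 2,
    by split_ifs <;> omega⟩, ?_⟩
  apply Fin.ext
  rw [erase2_id_val]
  simp only
  split_ifs <;> omega

lemma dualFamily {K V ι : Type*} [Field K] [AddCommGroup V] [Module K V] [DecidableEq ι]
    (v : ι → V) (hli : LinearIndependent K v) :
    ∃ φ : ι → V →ₗ[K] K, ∀ i j, φ i (v j) = if i = j then 1 else 0 := by
  let B := Module.Basis.span hli
  choose g hg using fun i => LinearMap.exists_extend (V := V) (V' := K) (B.coord i)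
  refine ⟨g, fun i j => ?_⟩
  have h1 : v j = (Submodule.span K (Set.range v)).subtype (B j) := congrArg Subtype.val (Module.Basis.span_apply hli j).symm
  rw [h1, ← LinearMap.comp_apply, hg, Module.Basis.coord_apply, Module.Basis.repr_self,
    Finsupp.single_apply]
  by_cases h : i = j <;> simp [h, eq_comm]

lemma kappa_key {n : ℕ}
    (Ω : (Fin (2 * n) → ℝ) →ₗ[ℝ] (Fin (2 * n) → ℝ) →ₗ[ℝ] ℝ)
    (v : Fin (n + 1) → (Fin (2 * n) → ℝ))
    (hli : LinearIndependent ℝ v)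
    (hk : kappaSimple (Fin (2 * n) → ℝ) (fun x y => Ω x y) v = 0)
    (p q : Fin (n + 1)) (hpq : (p : ℕ) < (q : ℕ)) : Ω (v p) (v q) = 0 := by
  classical
  obtain ⟨φ, hφ⟩ := dualFamily v hli
  set c : Fin (n-1) → Fin (n+1) := erase2 (id : Fin (n+1) → Fin (n+1)) p q with hc
  set g : (Fin (2*n) → ℝ) →ₗ[ℝ] (Fin (n-1) → ℝ) := LinearMap.pi (fun j => φ (c j)) with hg
  set f : (Fin (2*n) → ℝ) [⋀^Fin (n-1)]→ₗ[ℝ] ℝ :=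
    (Matrix.detRowAlternating (n := Fin (n-1)) (R := ℝ)).compLinearMap g with hf
  set F : ExteriorAlgebra ℝ (Fin (2*n) → ℝ) →ₗ[ℝ] ℝ :=
    ExteriorAlgebra.liftAlternating
      (Function.update (0 : ∀ i, (Fin (2*n) → ℝ) [⋀^Fin i]→ₗ[ℝ] ℝ) (n-1) f) with hF
  have hFval : ∀ w : Fin (n-1) → (Fin (2*n) → ℝ),
      F (ExteriorAlgebra.ιMulti ℝ (n-1) w) = f w := by
    intro w
    rw [hF, ExteriorAlgebra.liftAlternating_apply_ιMulti, Function.update_self]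
  -- value of f on the erased families
  have hfval : ∀ p' q' : Fin (n+1), (p' : ℕ) < (q' : ℕ) →
      f (erase2 v p' q') = if p' = p ∧ q' = q then 1 else 0 := by
    intro p' q' hlt
    set c' : Fin (n-1) → Fin (n+1) := erase2 (id : Fin (n+1) → Fin (n+1)) p' q' with hc'
    have hmat : f (erase2 v p' q') =
        Matrix.det (Matrix.of fun i j => if c j = c' i then (1:ℝ) else 0) := by
      have hrows : (fun i => g (erase2 v p' q' i)) =
          (fun i j => if c j = c' i then (1:ℝ) else 0) := by
        funext i j
        show φ (c j) (erase2 v p' q' i) = _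
        rw [erase2_eq_comp]
        exact hφ (c j) (c' i)
      rw [hf, AlternatingMap.compLinearMap_apply, hrows]
      rfl
    rw [hmat]
    by_cases he : p' = p ∧ q' = q
    · obtain ⟨rfl, rfl⟩ := he
      rw [if_pos ⟨rfl, rfl⟩]
      have : (Matrix.of fun i j => if c j = c' i then (1:ℝ) else 0) = 1 := by
        ext i j
        rw [Matrix.of_apply, Matrix.one_apply]
        have : c j = c' i ↔ i = j := by
          rw [hc', ← hc]
          constructor
          · intro h; exact (erase2_id_injective hpq h.symm)
          · intro h; rw [h]
        simp [this]
      rw [this, Matrix.det_one]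
    · rw [if_neg he]
      have he' : ¬((p' : ℕ) = (p : ℕ) ∧ (q' : ℕ) = (q : ℕ)) := by
        intro ⟨h1, h2⟩; exact he ⟨Fin.ext h1, Fin.ext h2⟩
      have hr : ∃ r : Fin (n+1), (r = p ∨ r = q) ∧ r ≠ p' ∧ r ≠ q' := by
        by_cases hp1 : (p : ℕ) = (p' : ℕ) ∨ (p : ℕ) = (q' : ℕ)
        · refine ⟨q, Or.inr rfl, ?_, ?_⟩ <;> (rw [Ne, Fin.ext_iff]; omega)
        · push_neg at hp1
          refine ⟨p, Or.inl rfl, ?_, ?_⟩ <;> (rw [Ne, Fin.ext_iff]; omega)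
      obtain ⟨r, hrpq, hrp', hrq'⟩ := hr
      obtain ⟨i₀, hi₀⟩ := erase2_id_exists hlt r hrp' hrq'
      apply Matrix.det_eq_zero_of_row_eq_zero i₀
      intro j
      rw [Matrix.of_apply, hc', hi₀, if_neg]
      rcases hrpq with rfl | rfl
      · exact (erase2_id_ne hpq j).1
      · exact (erase2_id_ne hpq j).2
  -- apply F to the hypothesis
  have h0 : F (kappaSimple (Fin (2*n) → ℝ) (fun x y => Ω x y) v) = 0 := by
    rw [hk, map_zero]
  rw [kappaSimple] at h0
  simp only [map_sum, apply_ite F, map_smul, map_zero, hFval, smul_eq_mul] at h0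
  have hterm : ∀ p' q' : Fin (n+1),
      (if (p' : ℕ) < (q' : ℕ) then
        ((-1:ℝ) ^ ((p':ℕ) + (q':ℕ) + 1) * Ω (v p') (v q')) * f (erase2 v p' q') else 0)
      = if p' = p ∧ q' = q then ((-1:ℝ) ^ ((p:ℕ) + (q:ℕ) + 1) * Ω (v p) (v q)) else 0 := by
    intro p' q'
    by_cases hlt : (p' : ℕ) < (q' : ℕ)
    · rw [if_pos hlt, hfval p' q' hlt]
      by_cases he : p' = p ∧ q' = q
      · obtain ⟨rfl, rfl⟩ := he
        rw [if_pos ⟨rfl, rfl⟩, if_pos ⟨rfl, rfl⟩, mul_one]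
      · rw [if_neg he, if_neg he, mul_zero]
    · rw [if_neg hlt, if_neg]
      rintro ⟨rfl, rfl⟩; exact hlt hpq
  rw [Finset.sum_congr rfl (fun p' _ => Finset.sum_congr rfl (fun q' _ => hterm p' q'))] at h0
  simp only [ite_and] at h0
  rw [Finset.sum_comm] at h0
  simp only [Finset.sum_ite_eq', Finset.mem_univ, if_true] at h0
  rcases mul_eq_zero.mp h0 with h | h
  · exact absurd h (pow_ne_zero _ (by norm_num))
  · exact h

/-- For a skew-symmetric bilinear form Ω on ℝ^{2n} and v₁ ∧ … ∧ v_{n+1} ≠ 0,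
κ(v₁ ∧ … ∧ v_{n+1}) = 0 iff span(v₁, …, v_{n+1}) is Ω-isotropic. -/
theorem kappa_eq_zero_iff_isotropic (n : ℕ)
    (Ω : (Fin (2 * n) → ℝ) →ₗ[ℝ] (Fin (2 * n) → ℝ) →ₗ[ℝ] ℝ)
    (hskew : ∀ x y, Ω x y = -Ω y x)
    (v : Fin (n + 1) → (Fin (2 * n) → ℝ))
    (hv : ExteriorAlgebra.ιMulti ℝ (n + 1) v ≠ 0) :
    kappaSimple (Fin (2 * n) → ℝ) (fun x y => Ω x y) v = 0 ↔
      ∀ x ∈ Submodule.span ℝ (Set.range v),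
        ∀ y ∈ Submodule.span ℝ (Set.range v), Ω x y = 0 := by
  constructor
  · intro hk
    have hli : LinearIndependent ℝ v := by
      haveI : NoZeroSMulDivisors ℝ (ExteriorAlgebra ℝ (Fin (2 * n) → ℝ)) := by
        refine ⟨fun {c x} h => ?_⟩
        by_cases hc : c = 0
        · exact Or.inl hc
        · right
          have h2 := congrArg (fun z => c⁻¹ • z) h
          simpa [smul_smul, inv_mul_cancel₀ hc] using h2
      by_contra h
      exact hv (AlternatingMap.map_linearDependent _ v h)
    have hο : ∀ p q : Fin (n + 1), Ω (v p) (v q) = 0 := by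
      intro p q
      rcases lt_trichotomy (p : ℕ) (q : ℕ) with h | h | h
      · exact kappa_key Ω v hli hk p q h
      · have : p = q := Fin.ext h
        subst this
        have := hskew (v p) (v p)
        linarith
      · rw [hskew, kappa_key Ω v hli hk q p h, neg_zero]
    have h1 : ∀ x ∈ Submodule.span ℝ (Set.range v), ∀ j, Ω x (v j) = 0 := by
      intro x hx
      induction hx using Submodule.span_induction with
      | mem y hy => obtain ⟨i, rfl⟩ := hy; exact fun j => hο i j
      | zero => intro j; simp
      | add a b _ _ ha hb => intro j; rw [map_add, LinearMap.add_apply, ha j, hb j, add_zero]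
      | smul r a _ ha => intro j; rw [map_smul, LinearMap.smul_apply, ha j, smul_zero]
    intro x hx y hy
    induction hy using Submodule.span_induction with
    | mem z hz => obtain ⟨j, rfl⟩ := hz; exact h1 x hx j
    | zero => simp
    | add a b _ _ ha hb => rw [map_add, ha, hb, add_zero]
    | smul r a _ ha => rw [map_smul, ha, smul_zero]
  · intro hiso
    rw [kappaSimple]
    apply Finset.sum_eq_zero
    intro p _
    apply Finset.sum_eq_zero
    intro q _
    split_ifs with h
    · rw [hiso (v p) (Submodule.subset_span (Set.mem_range_self p))
        (v q) (Submodule.subset_span (Set.mem_range_self q)), mul_zero, zero_smul]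
    · rfl
end

section
/- Let (sigma, tilde-sigma) be a Kreweras pair with blocks B_1,...,B_{n+1}, and for each block define the vector v_k in R^{2n} by v_k = sum_{b ∈ B_k} (-1)^b e_b if B_k ⊆ [n], and v_k = sum_{b̃ ∈ B_k} (-1)^b e_{b̃} if B_k ⊆ [ñ]. Then span(v_1,...,v_{n+1}) is isotropic for the form Omega. -/
/-- Noncrossing condition for a partition of {0,…,m-1}. -/
def IsNoncrossing {m : ℕ} (P : Finpartition (Finset.univ : Finset (Fin m))) : Prop :=
  ∀ B ∈ P.parts, ∀ B' ∈ P.parts, B ≠ B' →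
    ¬ ∃ a b c d : Fin m, a < b ∧ b < c ∧ c < d ∧
      a ∈ B ∧ c ∈ B ∧ b ∈ B' ∧ d ∈ B'

/-- Encoding of [n] ⊔ [ñ] inside Fin (2n): the element i of [n] (1-based) is
2(i-1), the element ĩ of [ñ] is 2(i-1)+1, matching the circular order
1, 1̃, 2, 2̃, …, n, ñ. A Kreweras pair (σ, σ̃) is encoded as a single partition of
Fin (2n): it is noncrossing, each block lies entirely in [n] or in [ñ], and
there are n + 1 blocks in total. -/
def IsKrewerasPair {n : ℕ}
    (P : Finpartition (Finset.univ : Finset (Fin (2 * n)))) : Prop :=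
  IsNoncrossing P ∧
  (∀ B ∈ P.parts, (∀ x ∈ B, (x : ℕ) % 2 = 0) ∨ (∀ x ∈ B, (x : ℕ) % 2 = 1)) ∧
  P.parts.card = n + 1

/-- The vector associated to a block B of a Kreweras pair: for an unmarked
block B ⊆ [n], v = ∑_{b ∈ B} (-1)^b e_b, and for a tilde block B ⊆ [ñ],
v = ∑_{b̃ ∈ B} (-1)^b e_{b̃} (signs with 1-based b; index k of Fin (2n)
corresponds to 1-based b = k/2 + 1). -/
def blockVec {n : ℕ} (B : Finset (Fin (2 * n))) : Fin (2 * n) → ℝ :=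
  fun k => if k ∈ B then (-1 : ℝ) ^ ((k : ℕ) / 2 + 1) else 0

section KrewerasAux

variable {α : Type*} [DecidableEq α]

def NCOn (f : ℕ → α) (lo hi : ℕ) : Prop :=
  ∀ a b c d : ℕ, lo ≤ a → a < b → b < c → c < d → d ≤ hi → f a = f c → f b = f d → f a = f b

def ParOn (f : ℕ → α) (lo hi : ℕ) : Prop :=
  ∀ p q : ℕ, lo ≤ p → p ≤ hi → lo ≤ q → q ≤ hi → f p = f q → p % 2 = q % 2

theorem NCOn.mono {f : ℕ → α} {lo hi lo' hi' : ℕ} (h : NCOn f lo hi) (h1 : lo ≤ lo')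
    (h2 : hi' ≤ hi) : NCOn f lo' hi' :=
  fun a b c d ha hab hbc hcd hd => h a b c d (le_trans h1 ha) hab hbc hcd (le_trans hd h2)

theorem ParOn.mono {f : ℕ → α} {lo hi lo' hi' : ℕ} (h : ParOn f lo hi) (h1 : lo ≤ lo')
    (h2 : hi' ≤ hi) : ParOn f lo' hi' :=
  fun p q hp1 hp2 hq1 hq2 => h p q (le_trans h1 hp1) (le_trans hp2 h2) (le_trans h1 hq1)
    (le_trans hq2 h2)

theorem ML (N : ℕ) : ∀ lo hi : ℕ, hi - lo ≤ N → lo ≤ hi →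
    ∀ f : ℕ → α, NCOn f lo hi → ParOn f lo hi →
    ((hi - lo + 1) / 2 + 1 ≤ ((Finset.Icc lo hi).image f).card ∧
      (lo % 2 = hi % 2 → ((Finset.Icc lo hi).image f).card ≤ (hi - lo + 1) / 2 + 1 →
        f lo = f hi)) := by
  induction N with
  | zero =>
    intro lo hi hN hle f _ _
    have : lo = hi := by omega
    subst this
    simp
  | succ N ih =>
    intro lo hi hN hle f hNC hPar
    rcases eq_or_lt_of_le hle with heq | hlt
    · subst heq; simp
    · by_cases hex : ∃ p, (lo < p ∧ p ≤ hi) ∧ f p = f lo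
      · -- the block of lo has another element; split at the next one
        have hc : (lo < Nat.find hex ∧ Nat.find hex ≤ hi) ∧ f (Nat.find hex) = f lo :=
          Nat.find_spec hex
        set c := Nat.find hex with hcdef
        have hcmin : ∀ x, x < c → ¬((lo < x ∧ x ≤ hi) ∧ f x = f lo) :=
          fun x hx => Nat.find_min hex hx
        have hpar_c : c % 2 = lo % 2 := hPar c lo (by omega) hc.1.2 le_rfl hle hc.2
        have hc2 : lo + 2 ≤ c := by
          rcases Nat.lt_or_ge c (lo + 2) with h | h
          · exfalso
            have : c = lo + 1 := by omega
            omega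
          · exact h
        have hsep : ∀ x y, lo + 1 ≤ x → x ≤ c - 1 → c ≤ y → y ≤ hi → f x ≠ f y := by
          intro x y hx1 hx2 hy1 hy2 hxy
          have hxne : f x ≠ f lo := fun h => hcmin x (by omega) ⟨⟨by omega, by omega⟩, h⟩
          rcases eq_or_lt_of_le hy1 with rfl | hy
          · exact hxne (hxy.trans hc.2)
          · have := hNC lo x c y le_rfl (by omega) (by omega) hy hy2 hc.2.symm hxy
            exact hxne this.symm
        have himun : (Finset.Icc lo hi).image f =
            (Finset.Icc (lo+1) (c-1)).image f ∪ (Finset.Icc c hi).image f := by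
          ext z
          simp only [Finset.mem_image, Finset.mem_union, Finset.mem_Icc]
          constructor
          · rintro ⟨p, ⟨hp1, hp2⟩, rfl⟩
            rcases eq_or_lt_of_le hp1 with rfl | hp1'
            · exact Or.inr ⟨c, ⟨le_rfl, hc.1.2⟩, hc.2⟩
            · rcases Nat.lt_or_ge p c with h | h
              · exact Or.inl ⟨p, ⟨by omega, by omega⟩, rfl⟩
              · exact Or.inr ⟨p, ⟨h, hp2⟩, rfl⟩
          · rintro (⟨p, ⟨hp1, hp2⟩, rfl⟩ | ⟨p, ⟨hp1, hp2⟩, rfl⟩)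
            · exact ⟨p, ⟨by omega, by omega⟩, rfl⟩
            · exact ⟨p, ⟨by omega, by omega⟩, rfl⟩
        have hdisj : Disjoint ((Finset.Icc (lo+1) (c-1)).image f)
            ((Finset.Icc c hi).image f) := by
          rw [Finset.disjoint_left]
          rintro z hz1 hz2
          obtain ⟨x, hx, rfl⟩ := Finset.mem_image.1 hz1
          obtain ⟨y, hy, hyy⟩ := Finset.mem_image.1 hz2
          rw [Finset.mem_Icc] at hx hy
          exact hsep x y hx.1 hx.2 hy.1 hy.2 hyy.symm
        have hcard : ((Finset.Icc lo hi).image f).card =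
            ((Finset.Icc (lo+1) (c-1)).image f).card + ((Finset.Icc c hi).image f).card := by
          rw [himun, Finset.card_union_of_disjoint hdisj]
        obtain ⟨hI1, _⟩ := ih (lo+1) (c-1) (by omega) (by omega) f
          (hNC.mono (by omega) (by omega)) (hPar.mono (by omega) (by omega))
        obtain ⟨hJ1, hJ2⟩ := ih c hi (by omega) hc.1.2 f
          (hNC.mono (by omega) le_rfl) (hPar.mono (by omega) le_rfl)
        constructor
        · omega
        · intro hp hcd
          have hJc : ((Finset.Icc c hi).image f).card ≤ (hi - c + 1) / 2 + 1 := by omega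
          have := hJ2 (by omega) hJc
          exact hc.2 ▸ this
      · -- lo is alone among [lo, hi] in its block
        push_neg at hex
        have hsplit : Finset.Icc lo hi = insert lo (Finset.Icc (lo+1) hi) := by
          ext x
          simp only [Finset.mem_Icc, Finset.mem_insert]
          omega
        have hnot : f lo ∉ (Finset.Icc (lo+1) hi).image f := by
          simp only [Finset.mem_image, Finset.mem_Icc]
          rintro ⟨p, ⟨hp1, hp2⟩, hp3⟩
          exact hex p ⟨by omega, hp2⟩ hp3
        have hcard : ((Finset.Icc lo hi).image f).card =
            ((Finset.Icc (lo+1) hi).image f).card + 1 := by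
          rw [hsplit, Finset.image_insert, Finset.card_insert_of_notMem hnot]
        obtain ⟨h1, _⟩ := ih (lo+1) hi (by omega) (by omega) f
          (hNC.mono (by omega) le_rfl) (hPar.mono (by omega) le_rfl)
        constructor
        · omega
        · intro hpar hcd
          exfalso
          omega

def Valid (n : ℕ) (f : ℕ → α) : Prop :=
  NCOn f 0 (2*n - 1) ∧ ParOn f 0 (2*n - 1) ∧ ((Finset.range (2*n)).image f).card = n + 1

lemma mod_two_of_mod_two_n {n x : ℕ} (hn : 0 < n) : (x % (2*n)) % 2 = x % 2 :=
  Nat.mod_mod_of_dvd x ⟨n, rfl⟩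

lemma rot_lt (n r p : ℕ) (hp : p + r % (2*n) < 2*n) :
    (p + r) % (2*n) = p + r % (2*n) := by
  rw [← Nat.add_mod_mod p r (2*n)]
  exact Nat.mod_eq_of_lt hp

lemma rot_ge (n r p : ℕ) (hn : 0 < n) (hp : p < 2*n) (h : 2*n ≤ p + r % (2*n)) :
    (p + r) % (2*n) = p + r % (2*n) - 2*n := by
  have hr' : r % (2*n) < 2*n := Nat.mod_lt _ (by omega)
  rw [← Nat.add_mod_mod p r (2*n), Nat.mod_eq_sub_mod h, Nat.mod_eq_of_lt (by omega)]

theorem Valid.rot {n r : ℕ} (hn : 0 < n) (hr : r % 2 = 0) {f : ℕ → α} (hf : Valid n f) :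
    Valid n (fun p => f ((p + r) % (2*n))) := by
  obtain ⟨hNC, hPar, hcard⟩ := hf
  have hr' : r % (2*n) < 2*n := Nat.mod_lt _ (by omega)
  refine ⟨?_, ?_, ?_⟩
  · intro a b c d ha hab hbc hcd hd h1 h2
    simp only at h1 h2 ⊢
    by_cases ca : a + r % (2*n) < 2*n
    · by_cases cb : b + r % (2*n) < 2*n
      · by_cases cc : c + r % (2*n) < 2*n
        · by_cases cd : d + r % (2*n) < 2*n
          · rw [rot_lt n r a ca, rot_lt n r c cc] at h1
            rw [rot_lt n r b cb, rot_lt n r d cd] at h2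
            rw [rot_lt n r a ca, rot_lt n r b cb]
            exact hNC _ _ _ _ (by omega) (by omega) (by omega) (by omega) (by omega) h1 h2
          · rw [rot_lt n r a ca, rot_lt n r c cc] at h1
            rw [rot_lt n r b cb, rot_ge n r d hn (by omega) (by omega)] at h2
            rw [rot_lt n r a ca, rot_lt n r b cb]
            have key := hNC (d + r % (2*n) - 2*n) (a + r % (2*n)) (b + r % (2*n))
              (c + r % (2*n)) (by omega) (by omega) (by omega) (by omega) (by omega) h2.symm h1
            exact (h2.trans key).symm
        · have cd : ¬ d + r % (2*n) < 2*n := by omega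
          rw [rot_lt n r a ca, rot_ge n r c hn (by omega) (by omega)] at h1
          rw [rot_lt n r b cb, rot_ge n r d hn (by omega) (by omega)] at h2
          rw [rot_lt n r a ca, rot_lt n r b cb]
          have key := hNC (c + r % (2*n) - 2*n) (d + r % (2*n) - 2*n) (a + r % (2*n))
            (b + r % (2*n)) (by omega) (by omega) (by omega) (by omega) (by omega) h1.symm h2.symm
          exact h1.trans (key.trans h2.symm)
      · have cc : ¬ c + r % (2*n) < 2*n := by omega
        have cd : ¬ d + r % (2*n) < 2*n := by omega
        rw [rot_lt n r a ca, rot_ge n r c hn (by omega) (by omega)] at h1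
        rw [rot_ge n r b hn (by omega) (by omega), rot_ge n r d hn (by omega) (by omega)] at h2
        rw [rot_lt n r a ca, rot_ge n r b hn (by omega) (by omega)]
        have key := hNC (b + r % (2*n) - 2*n) (c + r % (2*n) - 2*n) (d + r % (2*n) - 2*n)
          (a + r % (2*n)) (by omega) (by omega) (by omega) (by omega) (by omega) h2 h1.symm
        exact h1.trans key.symm
    · have cb : ¬ b + r % (2*n) < 2*n := by omega
      have cc : ¬ c + r % (2*n) < 2*n := by omega
      have cd : ¬ d + r % (2*n) < 2*n := by omega
      rw [rot_ge n r a hn (by omega) (by omega), rot_ge n r c hn (by omega) (by omega)] at h1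
      rw [rot_ge n r b hn (by omega) (by omega), rot_ge n r d hn (by omega) (by omega)] at h2
      rw [rot_ge n r a hn (by omega) (by omega), rot_ge n r b hn (by omega) (by omega)]
      exact hNC _ _ _ _ (by omega) (by omega) (by omega) (by omega) (by omega) h1 h2
  · intro p q hp1 hp2 hq1 hq2 h
    simp only at h
    have := hPar ((p + r) % (2*n)) ((q + r) % (2*n)) (by omega)
      (by have := Nat.mod_lt (p + r) (show 0 < 2*n by omega); omega)
      (by omega)
      (by have := Nat.mod_lt (q + r) (show 0 < 2*n by omega); omega) h
    rw [mod_two_of_mod_two_n hn, mod_two_of_mod_two_n hn] at this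
    omega
  · have h1 : (Finset.range (2*n)).image (fun p => (p + r) % (2*n)) = Finset.range (2*n) := by
      apply Finset.eq_of_subset_of_card_le
      · intro x hx
        simp only [Finset.mem_image, Finset.mem_range] at hx ⊢
        obtain ⟨p, _, rfl⟩ := hx
        exact Nat.mod_lt _ (by omega)
      · rw [Finset.card_image_of_injOn]
        intro p hp q hq hpq
        simp only [Finset.coe_range, Set.mem_Iio] at hp hq
        simp only at hpq
        by_cases cp : p + r % (2*n) < 2*n <;> by_cases cq : q + r % (2*n) < 2*n
        · rw [rot_lt n r p cp, rot_lt n r q cq] at hpq; omega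
        · rw [rot_lt n r p cp, rot_ge n r q hn (by omega) (by omega)] at hpq; omega
        · rw [rot_ge n r p hn (by omega) (by omega), rot_lt n r q cq] at hpq; omega
        · rw [rot_ge n r p hn (by omega) (by omega),
            rot_ge n r q hn (by omega) (by omega)] at hpq; omega
    have h2 : (Finset.range (2*n)).image (fun p => f ((p + r) % (2*n))) =
        ((Finset.range (2*n)).image (fun p => (p + r) % (2*n))).image f := by
      rw [Finset.image_image]
      rfl
    rw [h2, h1, hcard]

lemma refl_eq (n : ℕ) (hn : 0 < n) : ∀ p, p < 2*n →
    (4*n - 2 - p) % (2*n) = if p = 2*n - 1 then 2*n - 1 else 2*n - 2 - p := by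
  intro p hp
  split
  · have h : 4*n - 2 - p = 2*n - 1 := by omega
    rw [h, Nat.mod_eq_of_lt (by omega)]
  · have h : 4*n - 2 - p = (2*n - 2 - p) + 2*n := by omega
    rw [h, Nat.add_mod_right, Nat.mod_eq_of_lt (by omega)]

theorem Valid.refl {n : ℕ} (hn : 0 < n) {f : ℕ → α} (hf : Valid n f) :
    Valid n (fun p => f ((4*n - 2 - p) % (2*n))) := by
  obtain ⟨hNC, hPar, hcard⟩ := hf
  refine ⟨?_, ?_, ?_⟩
  · intro a b c d ha hab hbc hcd hd h1 h2
    simp only at h1 h2 ⊢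
    simp only [refl_eq n hn a (by omega), refl_eq n hn b (by omega), refl_eq n hn c (by omega),
      refl_eq n hn d (by omega), if_neg (by omega : ¬ a = 2*n-1),
      if_neg (by omega : ¬ b = 2*n-1), if_neg (by omega : ¬ c = 2*n-1)] at h1 h2 ⊢
    by_cases hd' : d = 2*n - 1
    · rw [if_pos hd'] at h2
      -- tuple (2n-2-c, 2n-2-b, 2n-2-a, 2n-1)
      have key := hNC (2*n-2-c) (2*n-2-b) (2*n-2-a) (2*n-1) (by omega) (by omega) (by omega)
        (by omega) (by omega) h1.symm h2
      exact h1.trans key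
    · rw [if_neg hd'] at h2
      -- tuple (2n-2-d, 2n-2-c, 2n-2-b, 2n-2-a)
      have key := hNC (2*n-2-d) (2*n-2-c) (2*n-2-b) (2*n-2-a) (by omega) (by omega) (by omega)
        (by omega) (by omega) h2.symm h1.symm
      exact h1.trans (key.symm.trans h2.symm)
  · intro p q hp1 hp2 hq1 hq2 h
    simp only at h
    have := hPar ((4*n-2-p) % (2*n)) ((4*n-2-q) % (2*n)) (by omega)
      (by have := Nat.mod_lt (4*n-2-p) (show 0 < 2*n by omega); omega)
      (by omega)
      (by have := Nat.mod_lt (4*n-2-q) (show 0 < 2*n by omega); omega) h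
    rw [mod_two_of_mod_two_n hn, mod_two_of_mod_two_n hn] at this
    omega
  · have h1 : (Finset.range (2*n)).image (fun p => (4*n-2-p) % (2*n)) = Finset.range (2*n) := by
      apply Finset.eq_of_subset_of_card_le
      · intro x hx
        simp only [Finset.mem_image, Finset.mem_range] at hx ⊢
        obtain ⟨p, _, rfl⟩ := hx
        exact Nat.mod_lt _ (by omega)
      · rw [Finset.card_image_of_injOn]
        intro p hp q hq hpq
        simp only [Finset.coe_range, Set.mem_Iio] at hp hq
        simp only at hpq
        rw [refl_eq n hn p hp, refl_eq n hn q hq] at hpq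
        split_ifs at hpq <;> omega
    have h2 : (Finset.range (2*n)).image (fun p => f ((4*n-2-p) % (2*n))) =
        ((Finset.range (2*n)).image (fun p => (4*n-2-p) % (2*n))).image f := by
      rw [Finset.image_image]
      rfl
    rw [h2, h1, hcard]

lemma even_mod (n m : ℕ) : (2*m) % (2*n) = 2 * (m % n) := Nat.mul_mod_mul_left 2 m n

lemma odd_mod (n m : ℕ) (hn : 0 < n) : (2*m+1) % (2*n) = 2 * (m % n) + 1 := by
  have hdm : 2*m + 1 = (2*(m % n)+1) + (2*n)*(m / n) := by
    conv_lhs => rw [show m = n * (m / n) + m % n from (Nat.div_add_mod m n).symm]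
    ring
  have hlt : 2*(m % n)+1 < 2*n := by
    have := Nat.mod_lt m hn
    omega
  rw [hdm, Nat.add_mul_mod_self_left, Nat.mod_eq_of_lt hlt]

theorem hardCore (n : ℕ) (hn : 0 < n) (f : ℕ → α) (hf : Valid n f) :
    ∃ j < n, f (2*j+1) = f (2*n-1) ∧ f ((2*j+2) % (2*n)) = f (2*n-2) := by
  classical
  obtain ⟨hNC, hPar, hcard⟩ := hf
  have hrange : Finset.range (2*n) = Finset.Icc 0 (2*n-1) := by
    ext x; simp only [Finset.mem_range, Finset.mem_Icc]; omega
  rw [hrange] at hcard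
  by_cases hex : ∃ p, p ≤ 2*n-2 ∧ f p = f (2*n-1)
  · obtain ⟨p0, hp0, hp0f⟩ := hex
    set u := Nat.findGreatest (fun p => f p = f (2*n-1)) (2*n-2) with hu
    have hu_spec : f u = f (2*n-1) :=
      Nat.findGreatest_spec (P := fun p => f p = f (2*n-1)) hp0 hp0f
    have hu_le : u ≤ 2*n-2 := Nat.findGreatest_le _
    have hu_gr : ∀ k, u < k → k ≤ 2*n-2 → f k ≠ f (2*n-1) := fun k h1 h2 =>
      Nat.findGreatest_is_greatest (P := fun p => f p = f (2*n-1)) h1 h2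
    have hu_odd : u % 2 = 1 := by
      have := hPar u (2*n-1) (by omega) (by omega) (by omega) (by omega) hu_spec
      omega
    have hu3 : u ≤ 2*n-3 := by omega
    set X := (Finset.Icc 0 u).image f with hX
    set Y := (Finset.Icc (u+1) (2*n-1)).image f with hYdef
    set G := (Finset.Icc (u+1) (2*n-2)).image f with hG
    have himage : (Finset.Icc 0 (2*n-1)).image f = X ∪ Y := by
      rw [show Finset.Icc 0 (2*n-1) = Finset.Icc 0 u ∪ Finset.Icc (u+1) (2*n-1) from by
        ext x; simp only [Finset.mem_Icc, Finset.mem_union]; omega, Finset.image_union]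
    have hinter : X ∩ Y = {f (2*n-1)} := by
      ext z
      simp only [hX, hYdef, Finset.mem_inter, Finset.mem_image, Finset.mem_Icc,
        Finset.mem_singleton]
      constructor
      · rintro ⟨⟨p, ⟨_, hp2⟩, rfl⟩, ⟨p', ⟨hp'1, hp'2⟩, hp'⟩⟩
        by_cases hp'top : p' = 2*n-1
        · rw [← hp', hp'top]
        · have hpne : p' ≤ 2*n-2 := by omega
          by_cases hpu : p = u
          · rw [hpu]; exact hu_spec
          · have hcr := hNC p u p' (2*n-1) (by omega) (by omega) (by omega) (by omega)
              (by omega) hp'.symm hu_spec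
            rw [hcr]; exact hu_spec
      · rintro rfl
        exact ⟨⟨u, ⟨by omega, le_rfl⟩, hu_spec⟩, ⟨2*n-1, ⟨by omega, le_rfl⟩, rfl⟩⟩
    have hnotG : f (2*n-1) ∉ G := by
      rw [hG]
      simp only [Finset.mem_image, Finset.mem_Icc]
      rintro ⟨p, ⟨hp1, hp2⟩, hp3⟩
      exact hu_gr p (by omega) hp2 hp3
    have hYins : Y = insert (f (2*n-1)) G := by
      rw [hYdef, hG, show Finset.Icc (u+1) (2*n-1) = insert (2*n-1) (Finset.Icc (u+1) (2*n-2))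
        from by ext x; simp only [Finset.mem_Icc, Finset.mem_insert]; omega, Finset.image_insert]
    have cardY : Y.card = G.card + 1 := by
      rw [hYins, Finset.card_insert_of_notMem hnotG]
    have card_eq : X.card + Y.card = (n+1) + 1 := by
      have h := Finset.card_union_add_card_inter X Y
      rw [hinter, ← himage, hcard] at h
      simp only [Finset.card_singleton] at h
      omega
    obtain ⟨hX1, _⟩ := ML (2*n) 0 u (by omega) (by omega) f
      (hNC.mono (by omega) (by omega)) (hPar.mono (by omega) (by omega))
    obtain ⟨hG1, hG2⟩ := ML (2*n) (u+1) (2*n-2) (by omega) (by omega) f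
      (hNC.mono (by omega) (by omega)) (hPar.mono (by omega) (by omega))
    simp only [Nat.sub_zero] at hX1
    rw [← hX] at hX1
    rw [← hG] at hG2
    have hfin : f (u+1) = f (2*n-2) := by
      apply hG2 (by omega)
      omega
    refine ⟨u/2, by omega, ?_, ?_⟩
    · rw [show 2*(u/2)+1 = u by omega]
      exact hu_spec
    · rw [show 2*(u/2)+2 = u+1 by omega, Nat.mod_eq_of_lt (by omega)]
      exact hfin
  · push_neg at hex
    have hsplit : Finset.Icc 0 (2*n-1) = insert (2*n-1) (Finset.Icc 0 (2*n-2)) := by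
      ext x; simp only [Finset.mem_Icc, Finset.mem_insert]; omega
    have hnotG : f (2*n-1) ∉ (Finset.Icc 0 (2*n-2)).image f := by
      simp only [Finset.mem_image, Finset.mem_Icc]
      rintro ⟨p, ⟨_, hp2⟩, hp3⟩
      exact hex p hp2 hp3
    have hcard0 : ((Finset.Icc 0 (2*n-2)).image f).card = n := by
      rw [hsplit, Finset.image_insert, Finset.card_insert_of_notMem hnotG] at hcard
      omega
    obtain ⟨hG1, hG2⟩ := ML (2*n) 0 (2*n-2) (by omega) (by omega) f
      (hNC.mono (by omega) (by omega)) (hPar.mono (by omega) (by omega))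
    have hfin : f 0 = f (2*n-2) := by
      apply hG2 (by omega)
      rw [hcard0]
      omega
    refine ⟨n-1, by omega, ?_, ?_⟩
    · rw [show 2*(n-1)+1 = 2*n-1 by omega]
    · rw [show 2*(n-1)+2 = 2*n by omega, Nat.mod_self]
      exact hfin

theorem hard1 {n : ℕ} (hn : 0 < n) {f : ℕ → α} (hf : Valid n f) {q : ℕ} (hq : q < n) :
    ∃ j < n, f (2*j+1) = f (2*q+1) ∧ f ((2*j+2) % (2*n)) = f (2*q) := by
  have hg := hf.rot (r := 2*q+2) hn (by omega)
  obtain ⟨j, hj, h1, h2⟩ := hardCore n hn _ hg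
  have e1 : (2*n-1 + (2*q+2)) % (2*n) = 2*q+1 := by
    rw [show 2*n-1 + (2*q+2) = (2*q+1) + 2*n by omega, Nat.add_mod_right,
      Nat.mod_eq_of_lt (by omega)]
  have e2 : (2*n-2 + (2*q+2)) % (2*n) = 2*q := by
    rw [show 2*n-2 + (2*q+2) = (2*q) + 2*n by omega, Nat.add_mod_right,
      Nat.mod_eq_of_lt (by omega)]
  rw [e1] at h1
  rw [e2] at h2
  refine ⟨(j+q+1) % n, Nat.mod_lt _ hn, ?_, ?_⟩
  · rw [← odd_mod n (j+q+1) hn, show 2*(j+q+1)+1 = 2*j+1 + (2*q+2) by ring]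
    exact h1
  · have e3 : ((2*j+2) % (2*n) + (2*q+2)) % (2*n) = (2*((j+q+1) % n)+2) % (2*n) := by
      rw [Nat.mod_add_mod, show 2*j+2 + (2*q+2) = 2*(j+q+2) by ring, even_mod n (j+q+2),
        show 2*((j+q+1) % n)+2 = 2*((j+q+1) % n + 1) by ring, even_mod n]
      rw [Nat.mod_add_mod, show j+q+1+1 = j+q+2 from by omega]
    rw [← e3]
    exact h2

lemma refl_odd (n : ℕ) (hn : 0 < n) (f : ℕ → α) (k : ℕ) (hk : k < n) :
    f ((4*n-2-(2*k+1)) % (2*n)) = f (2*((2*n-2-k) % n) + 1) := by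
  rw [show 4*n-2-(2*k+1) = 2*(2*n-2-k)+1 from by omega, odd_mod n _ hn]

lemma refl_even (n : ℕ) (hn : 0 < n) (f : ℕ → α) (k : ℕ) (hk : k < n) :
    f ((4*n-2-(2*k)) % (2*n)) = f ((2*((2*n-2-k) % n)+2) % (2*n)) := by
  rw [show 4*n-2-2*k = 2*(2*n-1-k) from by omega, even_mod n,
    show 2*((2*n-2-k) % n)+2 = 2*((2*n-2-k) % n + 1) from by ring, even_mod n,
    Nat.mod_add_mod, show 2*n-2-k+1 = 2*n-1-k from by omega]

lemma refl_even' (n : ℕ) (hn : 0 < n) (f : ℕ → α) (k : ℕ) (hk : k < n) :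
    f ((4*n-2-((2*k+2) % (2*n))) % (2*n)) = f (2*((2*n-2-k) % n)) := by
  by_cases hk' : k = n-1
  · subst hk'
    rw [show 2*(n-1)+2 = 2*n from by omega, Nat.mod_self, Nat.sub_zero,
      show 4*n-2 = (2*n-2) + 2*n from by omega, Nat.add_mod_right,
      Nat.mod_eq_of_lt (by omega), show 2*n-2-(n-1) = n-1 from by omega,
      Nat.mod_eq_of_lt (by omega), show 2*(n-1) = 2*n-2 from by omega]
  · rw [Nat.mod_eq_of_lt (show 2*k+2 < 2*n from by omega),
      show 4*n-2-(2*k+2) = 2*(2*n-2-k) from by omega, even_mod n]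

theorem hard2 {n : ℕ} (hn : 0 < n) {f : ℕ → α} (hf : Valid n f) {j : ℕ} (hj : j < n) :
    ∃ q < n, f (2*q) = f ((2*j+2) % (2*n)) ∧ f (2*q+1) = f (2*j+1) := by
  have hF := hf.refl hn
  have hq0 : (2*n-2-j) % n < n := Nat.mod_lt _ hn
  obtain ⟨jF, hjF, h1, h2⟩ := hard1 hn hF (q := (2*n-2-j) % n) hq0

  have hinv : (2*n-2-(2*n-2-j) % n) % n = j := by
    by_cases hj' : j = n-1
    · subst hj'
      rw [show 2*n-2-(n-1) = n-1 from by omega,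
        Nat.mod_eq_of_lt (show n-1 < n from by omega),
        show 2*n-2-(n-1) = n-1 from by omega,
        Nat.mod_eq_of_lt (show n-1 < n from by omega)]
    · rw [show 2*n-2-j = (n-2-j)+n from by omega, Nat.add_mod_right,
        Nat.mod_eq_of_lt (show n-2-j < n from by omega),
        show 2*n-2-(n-2-j) = j+n from by omega,
        Nat.add_mod_right, Nat.mod_eq_of_lt (show j < n from by omega)]
  refine ⟨(2*n-2-jF) % n, Nat.mod_lt _ hn, ?_, ?_⟩
  · have e1 := refl_even' n hn f jF hjF
    have e2 := refl_even n hn f ((2*n-2-j) % n) hq0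
    rw [hinv] at e2
    rw [← e1, h2, e2]
  · have e1 := refl_odd n hn f jF hjF
    have e2 := refl_odd n hn f ((2*n-2-j) % n) hq0
    rw [hinv] at e2
    rw [← e1, h1, e2]

theorem count_eq {n : ℕ} (hn : 0 < n) {f : ℕ → α} (hf : Valid n f) (B B' : α) :
    ((Finset.range n).filter (fun q => f (2*q) = B ∧ f (2*q+1) = B')).card =
    ((Finset.range n).filter (fun j => f ((2*j+2) % (2*n)) = B ∧ f (2*j+1) = B')).card := by
  classical
  obtain ⟨hNC, hPar, hcard⟩ := hf
  by_cases hBB : B = B'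
  · subst hBB
    have h1 : (Finset.range n).filter (fun q => f (2*q) = B ∧ f (2*q+1) = B) = ∅ := by
      rw [Finset.filter_eq_empty_iff]
      rintro q hq ⟨e1, e2⟩
      rw [Finset.mem_range] at hq
      have := hPar (2*q) (2*q+1) (by omega) (by omega) (by omega) (by omega) (e1.trans e2.symm)
      omega
    have h2 : (Finset.range n).filter (fun j => f ((2*j+2) % (2*n)) = B ∧ f (2*j+1) = B) = ∅ := by
      rw [Finset.filter_eq_empty_iff]
      rintro j hj ⟨e1, e2⟩
      rw [Finset.mem_range] at hj
      have hlt : (2*j+2) % (2*n) < 2*n := Nat.mod_lt _ (by omega)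
      have := hPar ((2*j+2) % (2*n)) (2*j+1) (by omega) (by omega) (by omega) (by omega)
        (e1.trans e2.symm)
      rw [mod_two_of_mod_two_n hn] at this
      omega
    rw [h1, h2]
  · have c1 : ((Finset.range n).filter (fun q => f (2*q) = B ∧ f (2*q+1) = B')).card ≤ 1 := by
      rw [Finset.card_le_one]
      intro q1 h1 q2 h2
      simp only [Finset.mem_filter, Finset.mem_range] at h1 h2
      by_contra hne
      rcases lt_trichotomy q1 q2 with h | h | h
      · have key := hNC (2*q1) (2*q1+1) (2*q2) (2*q2+1) (by omega) (by omega) (by omega)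
          (by omega) (by omega) (h1.2.1.trans h2.2.1.symm) (h1.2.2.trans h2.2.2.symm)
        exact hBB (h1.2.1.symm.trans (key.trans h1.2.2))
      · exact hne h
      · have key := hNC (2*q2) (2*q2+1) (2*q1) (2*q1+1) (by omega) (by omega) (by omega)
          (by omega) (by omega) (h2.2.1.trans h1.2.1.symm) (h2.2.2.trans h1.2.2.symm)
        exact hBB (h2.2.1.symm.trans (key.trans h2.2.2))
    have c2 : ((Finset.range n).filter
        (fun j => f ((2*j+2) % (2*n)) = B ∧ f (2*j+1) = B')).card ≤ 1 := by
      rw [Finset.card_le_one]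
      intro j1 h1 j2 h2
      simp only [Finset.mem_filter, Finset.mem_range] at h1 h2
      by_contra hne
      have main : ∀ a b : ℕ, a < b → b < n →
          f ((2*a+2) % (2*n)) = B → f (2*a+1) = B' →
          f ((2*b+2) % (2*n)) = B → f (2*b+1) = B' → False := by
        intro a b hab hbn ea1 ea2 eb1 eb2
        by_cases hb' : b = n-1
        · subst hb'
          rw [show 2*(n-1)+2 = 2*n from by omega, Nat.mod_self] at eb1
          rw [Nat.mod_eq_of_lt (show 2*a+2 < 2*n from by omega)] at ea1
          have key := hNC 0 (2*a+1) (2*a+2) (2*(n-1)+1) (by omega) (by omega) (by omega)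
            (by omega) (by omega) (eb1.trans ea1.symm) (ea2.trans eb2.symm)
          exact hBB ((eb1.symm.trans key).trans ea2)
        · rw [Nat.mod_eq_of_lt (show 2*a+2 < 2*n from by omega)] at ea1
          rw [Nat.mod_eq_of_lt (show 2*b+2 < 2*n from by omega)] at eb1
          have key := hNC (2*a+1) (2*a+2) (2*b+1) (2*b+2) (by omega) (by omega) (by omega)
            (by omega) (by omega) (ea2.trans eb2.symm) (ea1.trans eb1.symm)
          exact hBB ((ea1.symm.trans key.symm).trans ea2)
      rcases lt_trichotomy j1 j2 with h | h | h
      · exact main j1 j2 h h2.1 h1.2.1 h1.2.2 h2.2.1 h2.2.2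
      · exact hne h
      · exact main j2 j1 h h1.1 h2.2.1 h2.2.2 h1.2.1 h1.2.2
    have hiff : ((Finset.range n).filter
          (fun q => f (2*q) = B ∧ f (2*q+1) = B')).Nonempty ↔
        ((Finset.range n).filter
          (fun j => f ((2*j+2) % (2*n)) = B ∧ f (2*j+1) = B')).Nonempty := by
      constructor
      · rintro ⟨q, hq⟩
        simp only [Finset.mem_filter, Finset.mem_range] at hq
        obtain ⟨j, hj, e1, e2⟩ := hard1 hn ⟨hNC, hPar, hcard⟩ hq.1
        exact ⟨j, by
          simp only [Finset.mem_filter, Finset.mem_range]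
          exact ⟨hj, e2.trans hq.2.1, e1.trans hq.2.2⟩⟩
      · rintro ⟨j, hj⟩
        simp only [Finset.mem_filter, Finset.mem_range] at hj
        obtain ⟨q, hq, e1, e2⟩ := hard2 hn ⟨hNC, hPar, hcard⟩ hj.1
        exact ⟨q, by
          simp only [Finset.mem_filter, Finset.mem_range]
          exact ⟨hq, e1.trans hj.2.1, e2.trans hj.2.2⟩⟩
    rcases Finset.eq_empty_or_nonempty ((Finset.range n).filter
        (fun q => f (2*q) = B ∧ f (2*q+1) = B')) with he | hne
    · rw [he]
      have : ((Finset.range n).filter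
          (fun j => f ((2*j+2) % (2*n)) = B ∧ f (2*j+1) = B')) = ∅ := by
        by_contra hc
        rw [← Finset.not_nonempty_iff_eq_empty] at hc
        push_neg at hc
        exact (Finset.not_nonempty_iff_eq_empty.2 he) (hiff.2 hc)
      rw [this]
    · have hne2 := hiff.1 hne
      have p1 := Finset.Nonempty.card_pos hne
      have p2 := Finset.Nonempty.card_pos hne2
      omega

/-! Bilinearity of Omega -/

lemma unmCoord_add {n : ℕ} (x y : Fin (2*n) → ℝ) (i : ℕ) :
    unmCoord (x + y) i = unmCoord x i + unmCoord y i := by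
  unfold unmCoord; split
  · simp
  · simp

lemma tldCoord_add {n : ℕ} (x y : Fin (2*n) → ℝ) (i : ℕ) :
    tldCoord (x + y) i = tldCoord x i + tldCoord y i := by
  unfold tldCoord; split
  · simp
  · simp

lemma unmCoord_smul {n : ℕ} (a : ℝ) (x : Fin (2*n) → ℝ) (i : ℕ) :
    unmCoord (a • x) i = a * unmCoord x i := by
  unfold unmCoord; split
  · simp
  · simp

lemma tldCoord_smul {n : ℕ} (a : ℝ) (x : Fin (2*n) → ℝ) (i : ℕ) :
    tldCoord (a • x) i = a * tldCoord x i := by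
  unfold tldCoord; split
  · simp
  · simp

lemma Omega_add_left (n : ℕ) (x x' y : Fin (2*n) → ℝ) :
    Omega n (x + x') y = Omega n x y + Omega n x' y := by
  unfold Omega
  simp only [unmCoord_add, tldCoord_add]
  have h1 : ∀ i ∈ Finset.range n,
      ((unmCoord x i + unmCoord x' i) * tldCoord y i -
        (tldCoord x i + tldCoord x' i) * unmCoord y i) =
      ((unmCoord x i * tldCoord y i - tldCoord x i * unmCoord y i) +
        (unmCoord x' i * tldCoord y i - tldCoord x' i * unmCoord y i)) := fun i _ => by ring
  have h2 : ∀ j ∈ Finset.range (n-1),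
      ((unmCoord x (j+1) + unmCoord x' (j+1)) * tldCoord y j -
        (tldCoord x j + tldCoord x' j) * unmCoord y (j+1)) =
      ((unmCoord x (j+1) * tldCoord y j - tldCoord x j * unmCoord y (j+1)) +
        (unmCoord x' (j+1) * tldCoord y j - tldCoord x' j * unmCoord y (j+1))) := fun j _ => by ring
  rw [Finset.sum_congr rfl h1, Finset.sum_congr rfl h2, Finset.sum_add_distrib,
    Finset.sum_add_distrib]
  ring

lemma Omega_add_right (n : ℕ) (x y y' : Fin (2*n) → ℝ) :
    Omega n x (y + y') = Omega n x y + Omega n x y' := by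
  unfold Omega
  simp only [unmCoord_add, tldCoord_add]
  have h1 : ∀ i ∈ Finset.range n,
      (unmCoord x i * (tldCoord y i + tldCoord y' i) -
        tldCoord x i * (unmCoord y i + unmCoord y' i)) =
      ((unmCoord x i * tldCoord y i - tldCoord x i * unmCoord y i) +
        (unmCoord x i * tldCoord y' i - tldCoord x i * unmCoord y' i)) := fun i _ => by ring
  have h2 : ∀ j ∈ Finset.range (n-1),
      (unmCoord x (j+1) * (tldCoord y j + tldCoord y' j) -
        tldCoord x j * (unmCoord y (j+1) + unmCoord y' (j+1))) =
      ((unmCoord x (j+1) * tldCoord y j - tldCoord x j * unmCoord y (j+1)) +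
        (unmCoord x (j+1) * tldCoord y' j - tldCoord x j * unmCoord y' (j+1))) := fun j _ => by ring
  rw [Finset.sum_congr rfl h1, Finset.sum_congr rfl h2, Finset.sum_add_distrib,
    Finset.sum_add_distrib]
  ring

lemma Omega_smul_left (n : ℕ) (a : ℝ) (x y : Fin (2*n) → ℝ) :
    Omega n (a • x) y = a * Omega n x y := by
  unfold Omega
  simp only [unmCoord_smul, tldCoord_smul]
  rw [mul_add, mul_add, Finset.mul_sum, Finset.mul_sum]
  congr 1
  · congr 1
    · exact Finset.sum_congr rfl fun i _ => by ring
    · exact Finset.sum_congr rfl fun j _ => by ring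
  · ring

lemma Omega_smul_right (n : ℕ) (a : ℝ) (x y : Fin (2*n) → ℝ) :
    Omega n x (a • y) = a * Omega n x y := by
  unfold Omega
  simp only [unmCoord_smul, tldCoord_smul]
  rw [mul_add, mul_add, Finset.mul_sum, Finset.mul_sum]
  congr 1
  · congr 1
    · exact Finset.sum_congr rfl fun i _ => by ring
    · exact Finset.sum_congr rfl fun j _ => by ring
  · ring

lemma Omega_zero_left (n : ℕ) (y : Fin (2*n) → ℝ) : Omega n 0 y = 0 := by
  unfold Omega unmCoord tldCoord
  simp

lemma Omega_zero_right (n : ℕ) (x : Fin (2*n) → ℝ) : Omega n x 0 = 0 := by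
  unfold Omega unmCoord tldCoord
  simp

theorem gen_isotropic (n : ℕ) (hn : 0 < n)
    (P : Finpartition (Finset.univ : Finset (Fin (2 * n))))
    (hP : IsKrewerasPair P) (B C : Finset (Fin (2 * n)))
    (hB : B ∈ P.parts) (hC : C ∈ P.parts) :
    Omega n (blockVec B) (blockVec C) = 0 := by
  classical
  obtain ⟨hNC, hparity, hcard⟩ := hP
  set f : ℕ → Finset (Fin (2 * n)) :=
    fun p => if h : p < 2*n then P.part ⟨p, h⟩ else ∅ with hfdef
  have fdef : ∀ (p : ℕ) (hp : p < 2*n), f p = P.part ⟨p, hp⟩ := fun p hp => dif_pos hp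
  have hmem : ∀ (p : ℕ) (hp : p < 2*n) (Bl : Finset (Fin (2*n))), Bl ∈ P.parts →
      ((⟨p, hp⟩ : Fin (2*n)) ∈ Bl ↔ f p = Bl) := by
    intro p hp Bl hBl
    constructor
    · intro hm
      rw [fdef p hp]
      exact P.part_eq_of_mem hBl hm
    · rintro rfl
      rw [fdef p hp]
      exact P.mem_part (Finset.mem_univ _)
  have hVal : Valid n f := by
    refine ⟨?_, ?_, ?_⟩
    · intro a b c d ha hab hbc hcd hd h1 h2
      by_contra hne
      have hd' : d < 2*n := by omega
      have hc' : c < 2*n := by omega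
      have hb' : b < 2*n := by omega
      have ha' : a < 2*n := by omega
      have hfa : f a ∈ P.parts := by
        rw [fdef a ha']; exact P.part_mem.2 (Finset.mem_univ _)
      have hfb : f b ∈ P.parts := by
        rw [fdef b hb']; exact P.part_mem.2 (Finset.mem_univ _)
      refine hNC (f a) hfa (f b) hfb hne
        ⟨⟨a, ha'⟩, ⟨b, hb'⟩, ⟨c, hc'⟩, ⟨d, hd'⟩, Fin.mk_lt_mk.2 hab, Fin.mk_lt_mk.2 hbc,
          Fin.mk_lt_mk.2 hcd, ?_, ?_, ?_, ?_⟩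
      · rw [fdef a ha']; exact P.mem_part (Finset.mem_univ _)
      · rw [h1, fdef c hc']; exact P.mem_part (Finset.mem_univ _)
      · rw [fdef b hb']; exact P.mem_part (Finset.mem_univ _)
      · rw [h2, fdef d hd']; exact P.mem_part (Finset.mem_univ _)
    · intro p q hp1 hp2 hq1 hq2 h
      have hp' : p < 2*n := by omega
      have hq' : q < 2*n := by omega
      have hfp : f p ∈ P.parts := by
        rw [fdef p hp']; exact P.part_mem.2 (Finset.mem_univ _)
      have hmp : (⟨p, hp'⟩ : Fin (2*n)) ∈ f p := by
        rw [fdef p hp']; exact P.mem_part (Finset.mem_univ _)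
      have hmq : (⟨q, hq'⟩ : Fin (2*n)) ∈ f p := by
        rw [h, fdef q hq']; exact P.mem_part (Finset.mem_univ _)
      rcases hparity (f p) hfp with he | ho
      · rw [he _ hmp, he _ hmq]
      · rw [ho _ hmp, ho _ hmq]
    · have himg : (Finset.range (2*n)).image f = P.parts := by
        ext Bl
        simp only [Finset.mem_image, Finset.mem_range]
        constructor
        · rintro ⟨p, hp, rfl⟩
          rw [fdef p hp]
          exact P.part_mem.2 (Finset.mem_univ _)
        · intro hBl
          obtain ⟨x, hx⟩ := P.nonempty_of_mem_parts hBl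
          refine ⟨(x : ℕ), x.2, ?_⟩
          rw [fdef (x : ℕ) x.2]
          exact P.part_eq_of_mem hBl (by simpa using hx)
      rw [himg, hcard]
  have tldzero : ∀ (Bl : Finset (Fin (2*n))), (∀ z ∈ Bl, (z : ℕ) % 2 = 0) →
      ∀ j, tldCoord (blockVec Bl) j = 0 := by
    intro Bl hBl j
    unfold tldCoord
    split
    · unfold blockVec
      split
      · next hm =>
        exfalso
        have := hBl _ hm
        simp only [Fin.val_mk] at this
        omega
      · rfl
    · rfl
  have unmzero : ∀ (Bl : Finset (Fin (2*n))), (∀ z ∈ Bl, (z : ℕ) % 2 = 1) →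
      ∀ i, unmCoord (blockVec Bl) i = 0 := by
    intro Bl hBl i
    unfold unmCoord
    split
    · unfold blockVec
      split
      · next hm =>
        exfalso
        have := hBl _ hm
        simp only [Fin.val_mk] at this
        omega
      · rfl
    · rfl
  have unmeval : ∀ Bl ∈ P.parts, ∀ i, i < n →
      unmCoord (blockVec Bl) i = if f (2*i) = Bl then (-1:ℝ)^(i+1) else 0 := by
    intro Bl hBl i hi
    unfold unmCoord blockVec
    rw [dif_pos (show 2*i < 2*n from by omega)]
    simp only [Fin.val_mk]
    rw [show (2*i)/2 = i from by omega]
    by_cases hm : f (2*i) = Bl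
    · rw [if_pos ((hmem (2*i) (by omega) Bl hBl).2 hm), if_pos hm]
    · rw [if_neg (fun hmm => hm ((hmem (2*i) (by omega) Bl hBl).1 hmm)), if_neg hm]
  have tldeval : ∀ Bl ∈ P.parts, ∀ j, j < n →
      tldCoord (blockVec Bl) j = if f (2*j+1) = Bl then (-1:ℝ)^(j+1) else 0 := by
    intro Bl hBl j hj
    unfold tldCoord blockVec
    rw [dif_pos (show 2*j+1 < 2*n from by omega)]
    simp only [Fin.val_mk]
    rw [show (2*j+1)/2 = j from by omega]
    by_cases hm : f (2*j+1) = Bl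
    · rw [if_pos ((hmem (2*j+1) (by omega) Bl hBl).2 hm), if_pos hm]
    · rw [if_neg (fun hmm => hm ((hmem (2*j+1) (by omega) Bl hBl).1 hmm)), if_neg hm]
  have hre : Finset.range n = Finset.range ((n-1)+1) := by
    rw [show (n-1)+1 = n from by omega]
  rcases hparity B hB with hBe | hBo <;> rcases hparity C hC with hCe | hCo
  · -- both unmarked: all tilde coordinates vanish
    have tx := tldzero B hBe
    have ty := tldzero C hCe
    unfold Omega
    simp [tx, ty]
  · -- B unmarked, C tilde : the main computation
    have key := count_eq hn hVal B C
    have tx := tldzero B hBe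
    have uy := unmzero C hCo
    have comp1 : (∑ i ∈ Finset.range n,
        (unmCoord (blockVec B) i * tldCoord (blockVec C) i -
          tldCoord (blockVec B) i * unmCoord (blockVec C) i)) =
        (((Finset.range n).filter (fun q => f (2*q) = B ∧ f (2*q+1) = C)).card : ℝ) := by
      rw [← Finset.sum_boole]
      apply Finset.sum_congr rfl
      intro i hi
      rw [Finset.mem_range] at hi
      rw [tx, uy, unmeval B hB i hi, tldeval C hC i hi]
      by_cases h1 : f (2*i) = B
      · by_cases h2 : f (2*i+1) = C
        · rw [if_pos h1, if_pos h2, if_pos (show _ ∧ _ from ⟨h1, h2⟩)]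
          have h3 : (-1:ℝ)^(i+1) * (-1)^(i+1) = 1 := by
            rw [← pow_add]
            exact Even.neg_one_pow ⟨i+1, by ring⟩
          rw [mul_zero, sub_zero, h3]
        · simp [h1, h2]
      · simp [h1]
    have comp2 : (∑ j ∈ Finset.range (n-1),
        (unmCoord (blockVec B) (j+1) * tldCoord (blockVec C) j -
          tldCoord (blockVec B) j * unmCoord (blockVec C) (j+1))) =
        -∑ j ∈ Finset.range (n-1), (if f (2*j+2) = B ∧ f (2*j+1) = C then (1:ℝ) else 0) := by
      rw [← Finset.sum_neg_distrib]
      apply Finset.sum_congr rfl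
      intro j hj
      rw [Finset.mem_range] at hj
      rw [tx, uy, unmeval B hB (j+1) (by omega), tldeval C hC j (by omega),
        show 2*(j+1) = 2*j+2 from by ring]
      by_cases h1 : f (2*j+2) = B
      · by_cases h2 : f (2*j+1) = C
        · rw [if_pos h1, if_pos h2, if_pos (show _ ∧ _ from ⟨h1, h2⟩)]
          have h3 : (-1:ℝ)^(j+1+1) * (-1)^(j+1) = -1 := by
            rw [← pow_add]
            exact Odd.neg_one_pow ⟨j+1, by ring⟩
          rw [mul_zero, sub_zero, h3]
        · simp [h1, h2]
      · simp [h1]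
    have comp3 : (-1:ℝ)^n * (unmCoord (blockVec B) 0 * tldCoord (blockVec C) (n-1) -
        tldCoord (blockVec B) (n-1) * unmCoord (blockVec C) 0) =
        -(if f 0 = B ∧ f (2*n-1) = C then (1:ℝ) else 0) := by
      rw [tx, uy, unmeval B hB 0 hn, tldeval C hC (n-1) (by omega),
        show 2*0 = 0 from rfl, show 2*(n-1)+1 = 2*n-1 from by omega,
        show (n-1)+1 = n from by omega]
      by_cases h1 : f 0 = B
      · by_cases h2 : f (2*n-1) = C
        · rw [if_pos h1, if_pos h2, if_pos (show _ ∧ _ from ⟨h1, h2⟩)]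
          have h3 : (-1:ℝ)^n * (-1)^n = 1 := by
            rw [← pow_add]
            exact Even.neg_one_pow ⟨n, by ring⟩
          calc (-1:ℝ)^n * ((-1)^(0+1) * (-1)^n - 0 * 0)
              = -((-1:ℝ)^n * (-1)^n) := by ring
            _ = -1 := by rw [h3]
        · simp [h1, h2]
      · simp [h1]
    have csum : (((Finset.range n).filter
        (fun j => f ((2*j+2) % (2*n)) = B ∧ f (2*j+1) = C)).card : ℝ) =
        (∑ j ∈ Finset.range (n-1), (if f (2*j+2) = B ∧ f (2*j+1) = C then (1:ℝ) else 0)) +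
        (if f 0 = B ∧ f (2*n-1) = C then (1:ℝ) else 0) := by
      rw [← Finset.sum_boole, hre, Finset.sum_range_succ,
        show 2*(n-1)+2 = 2*n from by omega, Nat.mod_self,
        show 2*(n-1)+1 = 2*n-1 from by omega]
      congr 1
      apply Finset.sum_congr rfl
      intro j hj
      rw [Finset.mem_range] at hj
      rw [Nat.mod_eq_of_lt (show 2*j+2 < 2*n from by omega)]
    unfold Omega
    rw [comp1, comp2, comp3, key, csum]
    ring
  · -- B tilde, C unmarked : mirrored computation
    have key := count_eq hn hVal C B
    have ux := unmzero B hBo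
    have ty := tldzero C hCe
    have comp1 : (∑ i ∈ Finset.range n,
        (unmCoord (blockVec B) i * tldCoord (blockVec C) i -
          tldCoord (blockVec B) i * unmCoord (blockVec C) i)) =
        -(((Finset.range n).filter (fun q => f (2*q) = C ∧ f (2*q+1) = B)).card : ℝ) := by
      rw [← Finset.sum_boole, ← Finset.sum_neg_distrib]
      apply Finset.sum_congr rfl
      intro i hi
      rw [Finset.mem_range] at hi
      rw [ux, ty, tldeval B hB i hi, unmeval C hC i hi]
      by_cases h1 : f (2*i) = C
      · by_cases h2 : f (2*i+1) = B
        · rw [if_pos h1, if_pos h2, if_pos (show _ ∧ _ from ⟨h1, h2⟩)]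
          have h3 : (-1:ℝ)^(i+1) * (-1)^(i+1) = 1 := by
            rw [← pow_add]
            exact Even.neg_one_pow ⟨i+1, by ring⟩
          rw [zero_mul, zero_sub, h3]
        · simp [h1, h2]
      · simp [h1]
    have comp2 : (∑ j ∈ Finset.range (n-1),
        (unmCoord (blockVec B) (j+1) * tldCoord (blockVec C) j -
          tldCoord (blockVec B) j * unmCoord (blockVec C) (j+1))) =
        ∑ j ∈ Finset.range (n-1), (if f (2*j+2) = C ∧ f (2*j+1) = B then (1:ℝ) else 0) := by
      apply Finset.sum_congr rfl
      intro j hj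
      rw [Finset.mem_range] at hj
      rw [ux, ty, tldeval B hB j (by omega), unmeval C hC (j+1) (by omega),
        show 2*(j+1) = 2*j+2 from by ring]
      by_cases h1 : f (2*j+2) = C
      · by_cases h2 : f (2*j+1) = B
        · rw [if_pos h1, if_pos h2, if_pos (show _ ∧ _ from ⟨h1, h2⟩)]
          have h3 : (-1:ℝ)^(j+1) * (-1)^(j+1+1) = -1 := by
            rw [← pow_add]
            exact Odd.neg_one_pow ⟨j+1, by ring⟩
          rw [zero_mul, zero_sub, h3]
          ring
        · simp [h1, h2]
      · simp [h1]
    have comp3 : (-1:ℝ)^n * (unmCoord (blockVec B) 0 * tldCoord (blockVec C) (n-1) -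
        tldCoord (blockVec B) (n-1) * unmCoord (blockVec C) 0) =
        (if f 0 = C ∧ f (2*n-1) = B then (1:ℝ) else 0) := by
      rw [ux, ty, tldeval B hB (n-1) (by omega), unmeval C hC 0 hn,
        show 2*0 = 0 from rfl, show 2*(n-1)+1 = 2*n-1 from by omega,
        show (n-1)+1 = n from by omega]
      by_cases h1 : f 0 = C
      · by_cases h2 : f (2*n-1) = B
        · rw [if_pos h1, if_pos h2, if_pos (show _ ∧ _ from ⟨h1, h2⟩)]
          have h3 : (-1:ℝ)^n * (-1)^n = 1 := by
            rw [← pow_add]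
            exact Even.neg_one_pow ⟨n, by ring⟩
          calc (-1:ℝ)^n * (0 * 0 - (-1)^n * (-1)^(0+1))
              = (-1:ℝ)^n * (-1)^n := by ring
            _ = 1 := h3
        · simp [h1, h2]
      · simp [h1]
    have csum : (((Finset.range n).filter
        (fun j => f ((2*j+2) % (2*n)) = C ∧ f (2*j+1) = B)).card : ℝ) =
        (∑ j ∈ Finset.range (n-1), (if f (2*j+2) = C ∧ f (2*j+1) = B then (1:ℝ) else 0)) +
        (if f 0 = C ∧ f (2*n-1) = B then (1:ℝ) else 0) := by
      rw [← Finset.sum_boole, hre, Finset.sum_range_succ,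
        show 2*(n-1)+2 = 2*n from by omega, Nat.mod_self,
        show 2*(n-1)+1 = 2*n-1 from by omega]
      congr 1
      apply Finset.sum_congr rfl
      intro j hj
      rw [Finset.mem_range] at hj
      rw [Nat.mod_eq_of_lt (show 2*j+2 < 2*n from by omega)]
    unfold Omega
    rw [comp1, comp2, comp3]
    have : (((Finset.range n).filter
        (fun j => f ((2*j+2) % (2*n)) = C ∧ f (2*j+1) = B)).card : ℝ) =
        (((Finset.range n).filter (fun q => f (2*q) = C ∧ f (2*q+1) = B)).card : ℝ) := by
      rw [key]
    rw [← this, csum]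
    ring
  · -- both tilde: all unmarked coordinates vanish
    have ux := unmzero B hBo
    have uy := unmzero C hCo
    unfold Omega
    simp [ux, uy]

end KrewerasAux

/-- For a Kreweras pair with blocks B₁, …, B_{n+1}, the span of the associated
vectors v₁, …, v_{n+1} is isotropic for the form Ω. -/
theorem kreweras_blockVec_span_isotropic (n : ℕ)
    (P : Finpartition (Finset.univ : Finset (Fin (2 * n))))
    (hP : IsKrewerasPair P) :
    ∀ x ∈ Submodule.span ℝ (blockVec '' (P.parts : Set (Finset (Fin (2 * n))))),
      ∀ y ∈ Submodule.span ℝ (blockVec '' (P.parts : Set (Finset (Fin (2 * n))))),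
        Omega n x y = 0 := by

  rcases Nat.eq_zero_or_pos n with hn | hn
  · exfalso
    have hc := hP.2.2
    have hpos : 0 < P.parts.card := by omega
    obtain ⟨B0, hB0⟩ := Finset.card_pos.mp hpos
    obtain ⟨x, -⟩ := P.nonempty_of_mem_parts hB0
    have := x.2
    omega
  · intro x hx y hy
    induction hx, hy using Submodule.span_induction₂ with
    | mem_mem u v hu hv =>
      obtain ⟨B, hB, rfl⟩ := hu
      obtain ⟨C, hC, rfl⟩ := hv
      exact gen_isotropic n hn P hP B C hB hC
    | zero_left v hv => exact Omega_zero_left n v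
    | zero_right u hu => exact Omega_zero_right n u
    | add_left u₁ u₂ v hu₁ hu₂ hv h1 h2 => rw [Omega_add_left, h1, h2, add_zero]
    | add_right u v₁ v₂ hu hv₁ hv₂ h1 h2 => rw [Omega_add_right, h1, h2, add_zero]
    | smul_left r u v hu hv h => rw [Omega_smul_left, h, mul_zero]
    | smul_right r u v hu hv h => rw [Omega_smul_right, h, mul_zero]
end

section
/- The vectors {f_sigma : sigma a noncrossing partition of [n]} are linearly independent in Λ^{n+1}(R^{2n}). -/
/-- The wedge e_{I,Ĩ} of the standard basis vectors of ℝ^{2n} indexed by the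
(n+1)-element set A, taken in increasing order. -/
noncomputable def eWedge (n : ℕ) (A : Finset (Fin (2 * n))) (h : A.card = n + 1) :
    ExteriorAlgebra ℝ (Fin (2 * n) → ℝ) :=
  ExteriorAlgebra.ιMulti ℝ (n + 1)
    (fun i => Pi.single ((A.orderIsoOfFin h i : Fin (2 * n))) (1 : ℝ))

/-- A subset A of [n] ⊔ [ñ] is concordant with the partition P when it meets
every block of P in exactly one element. -/
def Concordant {n : ℕ} (A : Finset (Fin (2 * n)))
    (P : Finpartition (Finset.univ : Finset (Fin (2 * n)))) : Prop :=
  ∀ B ∈ P.parts, (A ∩ B).card = 1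

instance {n : ℕ} (A : Finset (Fin (2 * n)))
    (P : Finpartition (Finset.univ : Finset (Fin (2 * n)))) :
    Decidable (Concordant A P) :=
  Finset.decidableDforallFinset

/-- Lam's vector f_σ = ∑_{(I,Ĩ) concordant with (σ,σ̃)} e_{I,Ĩ}, where the
Kreweras pair (σ,σ̃) is encoded as the partition P of Fin (2n). -/
noncomputable def fSigma (n : ℕ)
    (P : Finpartition (Finset.univ : Finset (Fin (2 * n)))) :
    ExteriorAlgebra ℝ (Fin (2 * n) → ℝ) :=
  ∑ A ∈ ((Finset.univ : Finset (Fin (2 * n))).powersetCard (n + 1)).attach,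
    if Concordant A.1 P then
      eWedge n A.1 (Finset.mem_powersetCard.mp A.2).2
    else 0

open Finset

namespace Lam

variable {m : ℕ}

def Itv (S : Finset (Fin m)) : Prop :=
  ∀ ⦃a b c : Fin m⦄, a ∈ S → c ∈ S → a ≤ b → b ≤ c → b ∈ S

def Mono (P : Finpartition (Finset.univ : Finset (Fin m))) : Prop :=
  ∀ B ∈ P.parts, (∀ x ∈ B, (x : ℕ) % 2 = 0) ∨ (∀ x ∈ B, (x : ℕ) % 2 = 1)

def DUBr (P : Finpartition (Finset.univ : Finset (Fin m))) (S : Finset (Fin m)) : Prop :=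
  ∀ B ∈ P.parts, (B ∩ S).Nonempty → ∀ b ∈ B, b ∈ S ∨ ∀ s ∈ S, s < b

def UB (P : Finpartition (Finset.univ : Finset (Fin m))) (S : Finset (Fin m)) : Prop :=
  ∀ B ∈ P.parts, (B ∩ S).Nonempty → B ⊆ S

noncomputable def nbp (P : Finpartition (Finset.univ : Finset (Fin m)))
    (S : Finset (Fin m)) : ℕ :=
  (P.parts.filter fun B => (B ∩ S).Nonempty).card

lemma UB.dubr {P : Finpartition (Finset.univ : Finset (Fin m))} {S : Finset (Fin m)}
    (h : UB P S) : DUBr P S :=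
  fun B hB hne b hb => Or.inl (h B hB hne hb)

lemma mono_pair {P : Finpartition (Finset.univ : Finset (Fin m))} (hm : Mono P)
    {B : Finset (Fin m)} (hB : B ∈ P.parts) {y x : Fin m} (hy : y ∈ B) (hx : x ∈ B) :
    (y : ℕ) % 2 = (x : ℕ) % 2 := by
  rcases hm B hB with h | h
  · rw [h y hy, h x hx]
  · rw [h y hy, h x hx]

lemma eq_of_mem_two {P : Finpartition (Finset.univ : Finset (Fin m))}
    {B B' : Finset (Fin m)} (hB : B ∈ P.parts) (hB' : B' ∈ P.parts) {a : Fin m}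
    (ha : a ∈ B) (ha' : a ∈ B') : B = B' :=
  P.eq_of_mem_parts hB hB' ha ha'

lemma gap_ub {P : Finpartition (Finset.univ : Finset (Fin m))} (hnc : IsNoncrossing P)
    {B : Finset (Fin m)} (hB : B ∈ P.parts) {y x : Fin m} (hy : y ∈ B) (hx : x ∈ B)
    (hcons : ∀ b ∈ B, ¬(y < b ∧ b < x)) :
    UB P (Ioo y x) := by
  intro B' hB' hne d hd
  obtain ⟨b, hb⟩ := hne
  rw [mem_inter, mem_Ioo] at hb
  have hBB' : B ≠ B' := by
    rintro rfl
    exact hcons b hb.1 hb.2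
  rw [mem_Ioo]
  by_contra hdIoo
  have hdB : d ∉ B := fun h => hBB' (eq_of_mem_two hB hB' h hd)
  rcases lt_trichotomy d y with h1 | h1 | h1
  · exact hnc B' hB' B hB (Ne.symm hBB')
      ⟨d, y, b, x, h1, hb.2.1, hb.2.2, hd, hb.1, hy, hx⟩
  · exact hdB (h1 ▸ hy)
  · rcases lt_trichotomy d x with h2 | h2 | h2
    · exact hdIoo ⟨h1, h2⟩
    · exact hdB (h2 ▸ hx)
    · exact hnc B hB B' hB' hBB' ⟨y, b, x, d, hb.2.1, hb.2.2, h2, hy, hx, hb.1, hd⟩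

section Peel

variable {P : Finpartition (Finset.univ : Finset (Fin m))} (hnc : IsNoncrossing P)
  (hm : Mono P) {S : Finset (Fin m)} (hItv : Itv S) (hdub : DUBr P S)
  {l y₁ : Fin m} {B₀ : Finset (Fin m)} (hB₀ : B₀ ∈ P.parts) (hlB₀ : l ∈ B₀)
  (hlS : l ∈ S) (hmax : ∀ s ∈ S, s ≤ l)
  (hy₁B : y₁ ∈ B₀) (hy₁S : y₁ ∈ S) (hy₁l : y₁ < l)
  (hy₁max : ∀ b ∈ B₀, b ∈ S → b ≠ l → b ≤ y₁)

include hItv hy₁S hlS hy₁max in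
lemma peel_cons : ∀ b ∈ B₀, ¬(y₁ < b ∧ b < l) := by
  intro b hb ⟨h1, h2⟩
  exact absurd (hy₁max b hb (hItv hy₁S hlS h1.le h2.le) (ne_of_lt h2)) (not_le.2 h1)

include hnc hItv hB₀ hlB₀ hy₁B hy₁S hlS hy₁max in
lemma peel_gub : UB P (Ioo y₁ l) :=
  gap_ub hnc hB₀ hy₁B hlB₀ (peel_cons hItv hlS hy₁S hy₁max)

include hItv hy₁S hlS in
lemma peel_gsub : Ioo y₁ l ⊆ S := by
  intro z hz
  rw [mem_Ioo] at hz
  exact hItv hy₁S hlS hz.1.le hz.2.le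

include hm hB₀ hy₁B hlB₀ hy₁l in
lemma peel_gne : (Ioo y₁ l).Nonempty := by
  have hpar := mono_pair hm hB₀ hy₁B hlB₀
  have hl : (l : ℕ) < m := l.isLt
  have hyl' : (y₁ : ℕ) < (l : ℕ) := hy₁l
  refine ⟨⟨(y₁ : ℕ) + 1, by omega⟩, ?_⟩
  rw [mem_Ioo]
  exact ⟨Fin.lt_def.mpr (by simp), Fin.lt_def.mpr (by simp; omega)⟩

include hItv in
lemma peel_s'itv : Itv (S ∩ Iic y₁) := by
  intro a b c ha hc hab hbc
  rw [mem_inter, mem_Iic] at *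
  exact ⟨hItv ha.1 hc.1 hab hbc, le_trans hbc hc.2⟩

include hy₁S in
lemma peel_s'ne : (S ∩ Iic y₁).Nonempty :=
  ⟨y₁, mem_inter.mpr ⟨hy₁S, mem_Iic.mpr le_rfl⟩⟩

include hnc hItv hdub hB₀ hlB₀ hlS hy₁B hy₁S hy₁max hy₁l in
lemma peel_s'dub : DUBr P (S ∩ Iic y₁) := by
  have gub := peel_gub hnc hItv hB₀ hlB₀ hlS hy₁B hy₁S hy₁max
  intro B hB hne b hb
  obtain ⟨b₀, hb₀⟩ := hne
  rw [mem_inter, mem_inter, mem_Iic] at hb₀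
  rcases hdub B hB ⟨b₀, mem_inter.mpr ⟨hb₀.1, hb₀.2.1⟩⟩ b hb with hbS | hball
  · rcases le_or_gt b y₁ with h | h
    · exact Or.inl (mem_inter.mpr ⟨hbS, mem_Iic.mpr h⟩)
    · rcases lt_or_ge b l with h2 | h2
      · -- b ∈ Ioo y₁ l, so B ⊆ Ioo y₁ l, contradicting b₀ ≤ y₁
        have : B ⊆ Ioo y₁ l := gub B hB ⟨b, mem_inter.mpr ⟨hb, mem_Ioo.mpr ⟨h, h2⟩⟩⟩
        have := mem_Ioo.mp (this hb₀.1)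
        exact absurd hb₀.2.2 (not_le.2 this.1)
      · -- b ≥ l and b ∈ S so b = l; then b exceeds everything in S ∩ Iic y₁
        refine Or.inr fun s hs => ?_
        rw [mem_inter, mem_Iic] at hs
        exact lt_of_le_of_lt hs.2 (lt_of_lt_of_le hy₁l h2)
  · exact Or.inr fun s hs => hball s (mem_inter.mp hs).1

include hItv hlS hmax hy₁S hy₁l in
lemma peel_scard : S.card = (S ∩ Iic y₁).card + (Ioo y₁ l).card + 1 := by
  have hdecomp : S = ((S ∩ Iic y₁) ∪ Ioo y₁ l) ∪ {l} := by
    ext z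
    simp only [mem_union, mem_inter, mem_Iic, mem_Ioo, mem_singleton]
    constructor
    · intro hz
      rcases le_or_gt z y₁ with h | h
      · exact Or.inl (Or.inl ⟨hz, h⟩)
      · rcases lt_or_ge z l with h2 | h2
        · exact Or.inl (Or.inr ⟨h, h2⟩)
        · exact Or.inr (le_antisymm (hmax z hz) h2)
    · rintro ((⟨h, _⟩ | h) | rfl)
      · exact h
      · exact hItv hy₁S hlS h.1.le h.2.le
      · exact hlS
  have h1 : Disjoint (S ∩ Iic y₁) (Ioo y₁ l) := by
    rw [disjoint_left]
    intro a ha ha'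
    rw [mem_inter, mem_Iic] at ha
    rw [mem_Ioo] at ha'
    exact absurd ha.2 (not_le.2 ha'.1)
  have h2 : Disjoint ((S ∩ Iic y₁) ∪ Ioo y₁ l) {l} := by
    rw [disjoint_singleton_right, mem_union, mem_inter, mem_Iic, mem_Ioo]
    rintro (⟨-, h⟩ | ⟨-, h⟩)
    · exact absurd h (not_le.2 hy₁l)
    · exact absurd h (lt_irrefl l)
  calc S.card = (((S ∩ Iic y₁) ∪ Ioo y₁ l) ∪ {l}).card := by rw [← hdecomp]
    _ = ((S ∩ Iic y₁) ∪ Ioo y₁ l).card + 1 := by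
        rw [card_union_of_disjoint h2, card_singleton]
    _ = (S ∩ Iic y₁).card + (Ioo y₁ l).card + 1 := by rw [card_union_of_disjoint h1]


include hnc hItv hB₀ hlB₀ hlS hmax hy₁B hy₁S hy₁max in
lemma peel_nsplit : nbp P S = nbp P (S ∩ Iic y₁) + nbp P (Ioo y₁ l) := by
  have gub := peel_gub hnc hItv hB₀ hlB₀ hlS hy₁B hy₁S hy₁max
  have gsub := peel_gsub hItv hlS hy₁S
  have hfil : P.parts.filter (fun B => (B ∩ S).Nonempty) =
      (P.parts.filter fun B => (B ∩ (S ∩ Iic y₁)).Nonempty) ∪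
      (P.parts.filter fun B => (B ∩ Ioo y₁ l).Nonempty) := by
    ext B
    simp only [mem_filter, mem_union]
    constructor
    · rintro ⟨hB, b, hb⟩
      rw [mem_inter] at hb
      rcases le_or_gt b y₁ with h | h
      · exact Or.inl ⟨hB, b, mem_inter.mpr ⟨hb.1, mem_inter.mpr ⟨hb.2, mem_Iic.mpr h⟩⟩⟩
      · rcases lt_or_ge b l with h2 | h2
        · exact Or.inr ⟨hB, b, mem_inter.mpr ⟨hb.1, mem_Ioo.mpr ⟨h, h2⟩⟩⟩
        · have hbl : b = l := le_antisymm (hmax b hb.2) h2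
          have hBB₀ : B = B₀ := eq_of_mem_two hB hB₀ (hbl ▸ hb.1) hlB₀
          exact Or.inl ⟨hB, y₁, by
            rw [hBB₀]
            exact mem_inter.mpr ⟨hy₁B, mem_inter.mpr ⟨hy₁S, mem_Iic.mpr le_rfl⟩⟩⟩
    · rintro (⟨hB, b, hb⟩ | ⟨hB, b, hb⟩)
      · rw [mem_inter, mem_inter] at hb
        exact ⟨hB, b, mem_inter.mpr ⟨hb.1, hb.2.1⟩⟩
      · rw [mem_inter] at hb
        exact ⟨hB, b, mem_inter.mpr ⟨hb.1, gsub hb.2⟩⟩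
  have hdisj : Disjoint (P.parts.filter fun B => (B ∩ (S ∩ Iic y₁)).Nonempty)
      (P.parts.filter fun B => (B ∩ Ioo y₁ l).Nonempty) := by
    rw [disjoint_left]
    rintro B hB1 hB2
    rw [mem_filter] at hB1 hB2
    have hsub : B ⊆ Ioo y₁ l := gub B hB1.1 hB2.2
    obtain ⟨b', hb'⟩ := hB1.2
    rw [mem_inter, mem_inter, mem_Iic] at hb'
    exact absurd hb'.2.2 (not_le.2 (mem_Ioo.mp (hsub hb'.1)).1)
  rw [nbp, hfil, card_union_of_disjoint hdisj]
  rfl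

section Case1

variable (hsingle : ∀ b ∈ B₀, b ∈ S → b = l)

include hItv hmax in
lemma case1_itv : Itv (S.erase l) := by
  intro a b c ha hc hab hbc
  rw [mem_erase] at *
  have hcl : c < l := lt_of_le_of_ne (hmax c hc.2) hc.1
  exact ⟨ne_of_lt (lt_of_le_of_lt hbc hcl), hItv ha.2 hc.2 hab hbc⟩

include hdub hB₀ hlB₀ hsingle in
lemma case1_dub : DUBr P (S.erase l) := by
  intro B hB hne b hb
  obtain ⟨b₀, hb₀⟩ := hne
  rw [mem_inter, mem_erase] at hb₀
  have hBne : B ≠ B₀ := by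
    rintro rfl
    exact hb₀.2.1 (hsingle b₀ hb₀.1 hb₀.2.2)
  rcases hdub B hB ⟨b₀, mem_inter.mpr ⟨hb₀.1, hb₀.2.2⟩⟩ b hb with hbS | hball
  · have hbl : b ≠ l := by
      rintro rfl
      exact hBne (eq_of_mem_two hB hB₀ hb hlB₀)
    exact Or.inl (mem_erase.mpr ⟨hbl, hbS⟩)
  · exact Or.inr fun s hs => hball s (mem_erase.mp hs).2

include hB₀ hlB₀ hlS hsingle in
lemma case1_nsplit : nbp P S = nbp P (S.erase l) + 1 := by
  have hfil : P.parts.filter (fun B => (B ∩ S).Nonempty) =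
      (P.parts.filter fun B => (B ∩ S.erase l).Nonempty) ∪ {B₀} := by
    ext B
    simp only [mem_filter, mem_union, mem_singleton]
    constructor
    · rintro ⟨hB, b, hb⟩
      rw [mem_inter] at hb
      by_cases hbl : b = l
      · exact Or.inr (eq_of_mem_two hB hB₀ (hbl ▸ hb.1) hlB₀)
      · exact Or.inl ⟨hB, b, mem_inter.mpr ⟨hb.1, mem_erase.mpr ⟨hbl, hb.2⟩⟩⟩
    · rintro (⟨hB, b, hb⟩ | rfl)
      · rw [mem_inter, mem_erase] at hb
        exact ⟨hB, b, mem_inter.mpr ⟨hb.1, hb.2.2⟩⟩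
      · exact ⟨hB₀, l, mem_inter.mpr ⟨hlB₀, hlS⟩⟩
  have hdisj : Disjoint (P.parts.filter fun B => (B ∩ S.erase l).Nonempty) {B₀} := by
    rw [disjoint_singleton_right, mem_filter]
    rintro ⟨-, b, hb⟩
    rw [mem_inter, mem_erase] at hb
    exact hb.2.1 (hsingle b hb.1 hb.2.2)
  rw [nbp, hfil, card_union_of_disjoint hdisj, card_singleton]
  rfl

end Case1

end Peel

lemma lb2r {P : Finpartition (Finset.univ : Finset (Fin m))} (hnc : IsNoncrossing P)
    (hm : Mono P) :
    ∀ S : Finset (Fin m), Itv S → DUBr P S → S.Nonempty → S.card + 1 ≤ 2 * nbp P S := by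
  intro S
  induction S using Finset.strongInduction with
  | _ S ih =>
  intro hItv hdub hne
  have hlS : S.max' hne ∈ S := S.max'_mem hne
  set l := S.max' hne with hldef
  have hmax : ∀ s ∈ S, s ≤ l := fun s hs => S.le_max' s hs
  obtain ⟨B₀, hB₀, hlB₀⟩ := P.exists_mem (mem_univ l)
  by_cases hcase : ((B₀ ∩ S).erase l).Nonempty
  · set T := (B₀ ∩ S).erase l with hT
    set y₁ := T.max' hcase with hy₁def
    have hy₁T : y₁ ∈ T := T.max'_mem hcase
    have hy₁BS : y₁ ∈ B₀ ∩ S ∧ y₁ ≠ l := by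
      have := mem_erase.mp hy₁T; exact ⟨this.2, this.1⟩
    have hy₁B : y₁ ∈ B₀ := (mem_inter.mp hy₁BS.1).1
    have hy₁S : y₁ ∈ S := (mem_inter.mp hy₁BS.1).2
    have hy₁l : y₁ < l := lt_of_le_of_ne (hmax _ hy₁S) hy₁BS.2
    have hy₁max : ∀ b ∈ B₀, b ∈ S → b ≠ l → b ≤ y₁ := fun b hb hbs hbl =>
      T.le_max' b (mem_erase.mpr ⟨hbl, mem_inter.mpr ⟨hb, hbs⟩⟩)
    have hgne := peel_gne hm hB₀ hlB₀ hy₁B hy₁l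
    have hs'ne : (S ∩ Iic y₁).Nonempty := peel_s'ne hy₁S
    have h1 := ih (S ∩ Iic y₁) ⟨inter_subset_left, fun hss =>
        absurd (mem_Iic.mp (mem_inter.mp (hss hlS)).2) (not_le.2 hy₁l)⟩
      (peel_s'itv hItv) (peel_s'dub hnc hItv hdub hB₀ hlB₀ hlS hy₁B hy₁S hy₁l hy₁max) hs'ne
    have h2 := ih (Ioo y₁ l) ⟨peel_gsub hItv hlS hy₁S, fun hss =>
        absurd (mem_Ioo.mp (hss hlS)).2 (lt_irrefl l)⟩
      (fun a b c ha hc hab hbc => by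
        rw [mem_Ioo] at *
        exact ⟨lt_of_lt_of_le ha.1 hab, lt_of_le_of_lt hbc hc.2⟩)
      ((peel_gub hnc hItv hB₀ hlB₀ hlS hy₁B hy₁S hy₁max).dubr) hgne
    have h3 := peel_scard hItv hlS hmax hy₁S hy₁l
    have h4 := peel_nsplit hnc hItv hB₀ hlB₀ hlS hmax hy₁B hy₁S hy₁max
    omega
  · have hsingle : ∀ b ∈ B₀, b ∈ S → b = l := by
      intro b hb hbs
      by_contra h
      exact hcase ⟨b, mem_erase.mpr ⟨h, mem_inter.mpr ⟨hb, hbs⟩⟩⟩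
    rcases (S.erase l).eq_empty_or_nonempty with hemp | hne'
    · have hS1 : S = {l} := by
        apply eq_singleton_iff_unique_mem.mpr
        refine ⟨hlS, fun s hs => ?_⟩
        by_contra h
        exact (eq_empty_iff_forall_notMem.mp hemp s) (mem_erase.mpr ⟨h, hs⟩)
      have hnbp : 1 ≤ nbp P S := by
        rw [nbp]
        exact card_pos.mpr ⟨B₀, mem_filter.mpr ⟨hB₀, l, mem_inter.mpr ⟨hlB₀, hlS⟩⟩⟩
      have : S.card = 1 := by rw [hS1]; exact card_singleton l
      omega
    · have h1 := ih (S.erase l) (erase_ssubset hlS) (case1_itv hItv hmax)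
        (case1_dub hdub hB₀ hlB₀ hsingle) hne'
      have h2 := case1_nsplit hB₀ hlB₀ hlS hsingle
      have h3 : S.card = (S.erase l).card + 1 := by
        rw [card_erase_of_mem hlS]
        have := card_pos.mpr hne
        omega
      omega

lemma eq_gap {P : Finpartition (Finset.univ : Finset (Fin m))} (hnc : IsNoncrossing P)
    (hm : Mono P) :
    ∀ S : Finset (Fin m), Itv S → DUBr P S → 2 * nbp P S = S.card + 1 →
    ∀ B ∈ P.parts, ∀ y ∈ B ∩ S, ∀ x ∈ B ∩ S, y < x → (∀ b ∈ B, ¬(y < b ∧ b < x)) →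
    2 * nbp P (Ioo y x) = (Ioo y x).card + 1 := by
  intro S
  induction S using Finset.strongInduction with
  | _ S ih =>
  intro hItv hdub heq B hB y hyBS x hxBS hyx hcons
  have hyB : y ∈ B := (mem_inter.mp hyBS).1
  have hyS : y ∈ S := (mem_inter.mp hyBS).2
  have hxB : x ∈ B := (mem_inter.mp hxBS).1
  have hxS : x ∈ S := (mem_inter.mp hxBS).2
  have hne : S.Nonempty := ⟨y, hyS⟩
  have hlS : S.max' hne ∈ S := S.max'_mem hne
  set l := S.max' hne with hldef
  have hmax : ∀ s ∈ S, s ≤ l := fun s hs => S.le_max' s hs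
  obtain ⟨B₀, hB₀, hlB₀⟩ := P.exists_mem (mem_univ l)
  by_cases hcase : ((B₀ ∩ S).erase l).Nonempty
  · set T := (B₀ ∩ S).erase l with hT
    set y₁ := T.max' hcase with hy₁def
    have hy₁T : y₁ ∈ T := T.max'_mem hcase
    have hy₁BS : y₁ ∈ B₀ ∩ S ∧ y₁ ≠ l := by
      have := mem_erase.mp hy₁T; exact ⟨this.2, this.1⟩
    have hy₁B : y₁ ∈ B₀ := (mem_inter.mp hy₁BS.1).1
    have hy₁S : y₁ ∈ S := (mem_inter.mp hy₁BS.1).2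
    have hy₁l : y₁ < l := lt_of_le_of_ne (hmax _ hy₁S) hy₁BS.2
    have hy₁max : ∀ b ∈ B₀, b ∈ S → b ≠ l → b ≤ y₁ := fun b hb hbs hbl =>
      T.le_max' b (mem_erase.mpr ⟨hbl, mem_inter.mpr ⟨hb, hbs⟩⟩)
    have hgne := peel_gne hm hB₀ hlB₀ hy₁B hy₁l
    have hs'ne : (S ∩ Iic y₁).Nonempty := peel_s'ne hy₁S
    have hgitv : Itv (Ioo y₁ l) := fun a b c ha hc hab hbc => by
      rw [mem_Ioo] at *
      exact ⟨lt_of_lt_of_le ha.1 hab, lt_of_le_of_lt hbc hc.2⟩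
    have hgub := peel_gub hnc hItv hB₀ hlB₀ hlS hy₁B hy₁S hy₁max
    have hs'itv := peel_s'itv hItv (y₁ := y₁)
    have hs'dub := peel_s'dub hnc hItv hdub hB₀ hlB₀ hlS hy₁B hy₁S hy₁l hy₁max
    have hgssub : Ioo y₁ l ⊂ S := ⟨peel_gsub hItv hlS hy₁S, fun hss =>
        absurd (mem_Ioo.mp (hss hlS)).2 (lt_irrefl l)⟩
    have hs'ssub : S ∩ Iic y₁ ⊂ S := ⟨inter_subset_left, fun hss =>
        absurd (mem_Iic.mp (mem_inter.mp (hss hlS)).2) (not_le.2 hy₁l)⟩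
    have lbG := lb2r hnc hm (Ioo y₁ l) hgitv hgub.dubr hgne
    have lbS' := lb2r hnc hm (S ∩ Iic y₁) hs'itv hs'dub hs'ne
    have h3 := peel_scard hItv hlS hmax hy₁S hy₁l
    have h4 := peel_nsplit hnc hItv hB₀ hlB₀ hlS hmax hy₁B hy₁S hy₁max
    have eqG : 2 * nbp P (Ioo y₁ l) = (Ioo y₁ l).card + 1 := by omega
    have eqS' : 2 * nbp P (S ∩ Iic y₁) = (S ∩ Iic y₁).card + 1 := by omega
    by_cases hBG : (B ∩ Ioo y₁ l).Nonempty
    · have hsub : B ⊆ Ioo y₁ l := hgub B hB hBG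
      exact ih (Ioo y₁ l) hgssub hgitv hgub.dubr eqG B hB y
        (mem_inter.mpr ⟨hyB, hsub hyB⟩) x (mem_inter.mpr ⟨hxB, hsub hxB⟩) hyx hcons
    · have hyy₁ : y ≤ y₁ := by
        by_contra h
        push_neg at h
        have hyl : y < l := lt_of_lt_of_le hyx (hmax x hxS)
        exact hBG ⟨y, mem_inter.mpr ⟨hyB, mem_Ioo.mpr ⟨h, hyl⟩⟩⟩
      rcases eq_or_lt_of_le (hmax x hxS) with hxl | hxl
      · -- x = l, so B = B₀ and y = y₁
        have hBB₀ : B = B₀ := eq_of_mem_two hB hB₀ (hxl ▸ hxB) hlB₀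
        have hyy₁' : y₁ ≤ y := by
          by_contra h
          push_neg at h
          exact hcons y₁ (hBB₀ ▸ hy₁B) ⟨h, hxl ▸ hy₁l⟩
        have : y = y₁ := le_antisymm hyy₁ hyy₁'
        rw [this, hxl]
        exact eqG
      · -- x < l hence x ≤ y₁, recurse into S'
        have hxy₁ : x ≤ y₁ := by
          by_contra h
          push_neg at h
          exact hBG ⟨x, mem_inter.mpr ⟨hxB, mem_Ioo.mpr ⟨h, hxl⟩⟩⟩
        exact ih (S ∩ Iic y₁) hs'ssub hs'itv hs'dub eqS' B hB y
          (mem_inter.mpr ⟨hyB, mem_inter.mpr ⟨hyS, mem_Iic.mpr hyy₁⟩⟩) x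
          (mem_inter.mpr ⟨hxB, mem_inter.mpr ⟨hxS, mem_Iic.mpr hxy₁⟩⟩) hyx hcons
  · have hsingle : ∀ b ∈ B₀, b ∈ S → b = l := by
      intro b hb hbs
      by_contra h
      exact hcase ⟨b, mem_erase.mpr ⟨h, mem_inter.mpr ⟨hb, hbs⟩⟩⟩
    rcases (S.erase l).eq_empty_or_nonempty with hemp | hne'
    · have hyl : y = l := by
        by_contra h
        exact (eq_empty_iff_forall_notMem.mp hemp y) (mem_erase.mpr ⟨h, hyS⟩)
      have hxl : x = l := by
        by_contra h
        exact (eq_empty_iff_forall_notMem.mp hemp x) (mem_erase.mpr ⟨h, hxS⟩)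
      exact absurd hyx (by rw [hyl, hxl]; exact lt_irrefl l)
    · have h1 := lb2r hnc hm (S.erase l) (case1_itv hItv hmax)
        (case1_dub hdub hB₀ hlB₀ hsingle) hne'
      have h2 := case1_nsplit hB₀ hlB₀ hlS hsingle
      have h3 : S.card = (S.erase l).card + 1 := by
        rw [card_erase_of_mem hlS]
        have := card_pos.mpr hne
        omega
      omega

lemma gap_eq_global {P : Finpartition (Finset.univ : Finset (Fin m))}
    (hnc : IsNoncrossing P) (hm : Mono P) (hcard : 2 * P.parts.card = m + 2)
    {B : Finset (Fin m)} (hB : B ∈ P.parts) {y x : Fin m} (hy : y ∈ B) (hx : x ∈ B)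
    (hyx : y < x) (hcons : ∀ b ∈ B, ¬(y < b ∧ b < x)) :
    2 * nbp P (Ioo y x) = (Ioo y x).card + 1 := by
  have hmpos : 0 < m := y.pos
  set z0 : Fin m := ⟨0, hmpos⟩ with hz0
  obtain ⟨B₀, hB₀, hz0B₀⟩ := P.exists_mem (mem_univ z0)
  have hB₀ne : B₀.Nonempty := ⟨z0, hz0B₀⟩
  set M := B₀.max' hB₀ne with hM
  have hMB₀ : M ∈ B₀ := B₀.max'_mem hB₀ne
  have hMmax : ∀ b ∈ B₀, b ≤ M := fun b hb => B₀.le_max' b hb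
  have hz0le : ∀ z : Fin m, z0 ≤ z := fun z => Fin.mk_le_mk.mpr (Nat.zero_le _) |>.trans le_rfl
  set U : Finset (Fin m) := Iic M with hU
  set T : Finset (Fin m) := Finset.univ.filter (fun z => M < z) with hTdef
  have hmemT : ∀ z : Fin m, z ∈ T ↔ M < z := fun z => by
    rw [hTdef, mem_filter]; exact ⟨fun h => h.2, fun h => ⟨mem_univ z, h⟩⟩
  have hUB_U : UB P U := by
    intro B' hB' hne' d hd
    obtain ⟨u, hu⟩ := hne'
    rw [mem_inter, mem_Iic] at hu
    rw [mem_Iic]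
    by_contra hdM
    push_neg at hdM
    have hB'B₀ : B' ≠ B₀ := by
      rintro rfl
      exact absurd (hMmax d hd) (not_le.2 hdM)
    have huB₀ : u ∉ B₀ := fun h => hB'B₀ (eq_of_mem_two hB' hB₀ hu.1 h)
    have h1 : z0 < u := lt_of_le_of_ne (hz0le u) (fun h => huB₀ (h ▸ hz0B₀))
    have h2 : u < M := lt_of_le_of_ne hu.2 (fun h => huB₀ (h ▸ hMB₀))
    exact hnc B₀ hB₀ B' hB' (Ne.symm hB'B₀) ⟨z0, u, M, d, h1, h2, hdM, hz0B₀, hMB₀, hu.1, hd⟩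
  have hUB_T : UB P T := by
    intro B' hB' hne' d hd
    obtain ⟨t, ht⟩ := hne'
    rw [mem_inter] at ht
    have htM : M < t := (hmemT t).mp ht.2
    rw [hmemT]
    by_contra hdM
    push_neg at hdM
    have hB'B₀ : B' ≠ B₀ := by
      rintro rfl
      exact absurd (hMmax t ht.1) (not_le.2 htM)
    have hdB₀ : d ∉ B₀ := fun h => hB'B₀ (eq_of_mem_two hB' hB₀ hd h)
    have h1 : z0 < d := lt_of_le_of_ne (hz0le d) (fun h => hdB₀ (h ▸ hz0B₀))
    have h2 : d < M := lt_of_le_of_ne hdM (fun h => hdB₀ (h ▸ hMB₀))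
    exact hnc B₀ hB₀ B' hB' (Ne.symm hB'B₀) ⟨z0, d, M, t, h1, h2, htM, hz0B₀, hMB₀, hd, ht.1⟩
  have hUitv : Itv U := fun a b c _ hc _ hbc => by
    rw [mem_Iic] at *
    exact le_trans hbc hc
  have hTitv : Itv T := fun a b c ha _ hab _ => by
    rw [hmemT] at *
    exact lt_of_lt_of_le ha hab
  have hUne : U.Nonempty := ⟨z0, mem_Iic.mpr (hz0le M)⟩
  have hmeven : m % 2 = 0 := by omega
  have hTne : T.Nonempty := by
    refine ⟨⟨m - 1, by omega⟩, (hmemT _).mpr ?_⟩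
    have hpar : (M : ℕ) % 2 = 0 := by
      have := mono_pair hm hB₀ hz0B₀ hMB₀
      simpa [hz0] using this.symm
    have hMlt : (M : ℕ) < m := M.isLt
    exact Fin.lt_def.mpr (by simp; omega)
  have hsplitcard : U.card + T.card = m := by
    have hdecomp : U ∪ T = Finset.univ := by
      ext z
      simp only [mem_union, mem_univ, iff_true]
      rcases le_or_gt z M with h | h
      · exact Or.inl (mem_Iic.mpr h)
      · exact Or.inr ((hmemT z).mpr h)
    have hdisj : Disjoint U T := by
      rw [disjoint_left]
      intro a ha ha'
      rw [mem_Iic] at ha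
      exact absurd ha (not_le.2 ((hmemT a).mp ha'))
    rw [← card_union_of_disjoint hdisj, hdecomp, card_univ, Fintype.card_fin]
  have hsplitnbp : nbp P U + nbp P T = P.parts.card := by
    have hfil : (P.parts.filter fun B' => (B' ∩ U).Nonempty) ∪
        (P.parts.filter fun B' => (B' ∩ T).Nonempty) = P.parts := by
      ext B'
      simp only [mem_union, mem_filter]
      constructor
      · rintro (⟨h, -⟩ | ⟨h, -⟩) <;> exact h
      · intro hB'
        obtain ⟨b, hb⟩ := P.nonempty_of_mem_parts hB'
        rcases le_or_gt b M with h | h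
        · exact Or.inl ⟨hB', b, mem_inter.mpr ⟨hb, mem_Iic.mpr h⟩⟩
        · exact Or.inr ⟨hB', b, mem_inter.mpr ⟨hb, (hmemT b).mpr h⟩⟩
    have hdisj : Disjoint (P.parts.filter fun B' => (B' ∩ U).Nonempty)
        (P.parts.filter fun B' => (B' ∩ T).Nonempty) := by
      rw [disjoint_left]
      rintro B' h1 h2
      rw [mem_filter] at h1 h2
      obtain ⟨t, ht⟩ := h2.2
      rw [mem_inter] at ht
      have : B' ⊆ U := hUB_U B' h1.1 h1.2
      exact absurd (mem_Iic.mp (this ht.1)) (not_le.2 ((hmemT t).mp ht.2))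
    rw [nbp, nbp, ← card_union_of_disjoint hdisj, hfil]
  have lbU := lb2r hnc hm U hUitv hUB_U.dubr hUne
  have lbT := lb2r hnc hm T hTitv hUB_T.dubr hTne
  have eqU : 2 * nbp P U = U.card + 1 := by omega
  have eqT : 2 * nbp P T = T.card + 1 := by omega
  obtain ⟨b, hb⟩ := P.nonempty_of_mem_parts hB
  rcases le_or_gt b M with hbM | hbM
  · have hsub : B ⊆ U := hUB_U B hB ⟨b, mem_inter.mpr ⟨hb, mem_Iic.mpr hbM⟩⟩
    exact eq_gap hnc hm U hUitv hUB_U.dubr eqU B hB y (mem_inter.mpr ⟨hy, hsub hy⟩)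
      x (mem_inter.mpr ⟨hx, hsub hx⟩) hyx hcons
  · have hsub : B ⊆ T := hUB_T B hB ⟨b, mem_inter.mpr ⟨hb, (hmemT b).mpr hbM⟩⟩
    exact eq_gap hnc hm T hTitv hUB_T.dubr eqT B hB y (mem_inter.mpr ⟨hy, hsub hy⟩)
      x (mem_inter.mpr ⟨hx, hsub hx⟩) hyx hcons

noncomputable def minset (P : Finpartition (Finset.univ : Finset (Fin m))) : Finset (Fin m) :=
  P.parts.attach.image fun B => B.1.min' (P.nonempty_of_mem_parts B.2)

lemma mem_minset {P : Finpartition (Finset.univ : Finset (Fin m))} {a : Fin m} :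
    a ∈ minset P ↔ ∃ B, ∃ hB : B ∈ P.parts, B.min' (P.nonempty_of_mem_parts hB) = a := by
  simp only [minset, mem_image, mem_attach, true_and, Subtype.exists]

lemma min'_mem_minset {P : Finpartition (Finset.univ : Finset (Fin m))} {B : Finset (Fin m)}
    (hB : B ∈ P.parts) : B.min' (P.nonempty_of_mem_parts hB) ∈ minset P :=
  mem_minset.mpr ⟨B, hB, rfl⟩

lemma card_minset (P : Finpartition (Finset.univ : Finset (Fin m))) :
    (minset P).card = P.parts.card := by
  rw [minset, card_image_of_injective _ ?_, card_attach]
  intro B B' h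
  simp only at h
  apply Subtype.ext
  apply eq_of_mem_two B.2 B'.2 (a := B'.1.min' (P.nonempty_of_mem_parts B'.2))
  · rw [← h]
    exact B.1.min'_mem _
  · exact B'.1.min'_mem _

lemma minset_inter_card {P : Finpartition (Finset.univ : Finset (Fin m))}
    {S : Finset (Fin m)}
    (h : ∀ B, ∀ hB : B ∈ P.parts, (B ∩ S).Nonempty →
      B.min' (P.nonempty_of_mem_parts hB) ∈ S) :
    (minset P ∩ S).card = nbp P S := by
  rw [nbp]
  symm
  apply Finset.card_bij (i := fun B hB =>
    B.min' (P.nonempty_of_mem_parts (mem_filter.mp hB).1))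
  · intro B hB
    rw [mem_filter] at hB
    exact mem_inter.mpr ⟨min'_mem_minset hB.1, h B hB.1 hB.2⟩
  · intro B hB B' hB' hmin
    rw [mem_filter] at hB hB'
    exact eq_of_mem_two hB.1 hB'.1 (hmin ▸ B.min'_mem _) (B'.min'_mem _)
  · intro a ha
    rw [mem_inter] at ha
    obtain ⟨B, hB, hmin⟩ := mem_minset.mp ha.1
    refine ⟨B, mem_filter.mpr ⟨hB, ⟨a, mem_inter.mpr ⟨hmin ▸ B.min'_mem _, ha.2⟩⟩⟩, hmin⟩

lemma inter_card_split (A : Finset (Fin m)) {y x : Fin m} (h : y ≤ x) :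
    (A ∩ Iic x).card = (A ∩ Iic y).card + (A ∩ Ioc y x).card := by
  have hsplit : Iic x = Iic y ∪ Ioc y x := by
    ext z
    simp only [mem_Iic, mem_union, mem_Ioc]
    constructor
    · intro hz
      rcases le_or_gt z y with h1 | h1
      · exact Or.inl h1
      · exact Or.inr ⟨h1, hz⟩
    · rintro (h1 | ⟨-, h1⟩)
      · exact le_trans h1 h
      · exact h1
  have hdisj : Disjoint (A ∩ Iic y) (A ∩ Ioc y x) := by
    rw [disjoint_left]
    intro a ha ha'
    rw [mem_inter, mem_Iic] at ha
    rw [mem_inter, mem_Ioc] at ha'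
    exact absurd ha.2 (not_le.2 ha'.2.1)
  rw [hsplit, inter_union_distrib_left, card_union_of_disjoint hdisj]

lemma card_Iic_split {y x : Fin m} (h : y ≤ x) :
    (Iic x).card = (Iic y).card + (Ioc y x).card := by
  have := inter_card_split (univ : Finset (Fin m)) h
  simpa using this

lemma inter_Ioc_card_of_not_mem {A : Finset (Fin m)} {y x : Fin m} (hx : x ∉ A) :
    (A ∩ Ioc y x) = A ∩ Ioo y x := by
  ext z
  simp only [mem_inter, mem_Ioc, mem_Ioo]
  constructor
  · rintro ⟨hz, h1, h2⟩
    exact ⟨hz, h1, lt_of_le_of_ne h2 (fun h => hx (h ▸ hz))⟩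
  · rintro ⟨hz, h1, h2⟩
    exact ⟨hz, h1, h2.le⟩

lemma card_Ioc_eq {y x : Fin m} (h : y < x) :
    (Ioc y x).card = (Ioo y x).card + 1 := by
  have : Ioc y x = Ioo y x ∪ {x} := by
    ext z
    simp only [mem_Ioc, mem_Ioo, mem_union, mem_singleton]
    constructor
    · rintro ⟨h1, h2⟩
      rcases eq_or_lt_of_le h2 with h3 | h3
      · exact Or.inr h3
      · exact Or.inl ⟨h1, h3⟩
    · rintro (⟨h1, h2⟩ | rfl)
      · exact ⟨h1, h2.le⟩
      · exact ⟨h, le_rfl⟩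
  rw [this, card_union_of_disjoint, card_singleton]
  rw [disjoint_singleton_right, mem_Ioo]
  rintro ⟨-, h2⟩
  exact absurd h2 (lt_irrefl x)

def HeightEq (A : Finset (Fin m)) (y x : Fin m) : Prop :=
  2 * (A ∩ Iic x).card + (Iic y).card = 2 * (A ∩ Iic y).card + (Iic x).card

lemma mem_minset_iff_min {P : Finpartition (Finset.univ : Finset (Fin m))} {x : Fin m} :
    x ∈ minset P ↔ ∀ b ∈ P.part x, x ≤ b := by
  constructor
  · intro hx b hb
    obtain ⟨B, hB, hmin⟩ := mem_minset.mp hx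
    have hxB : x ∈ B := hmin ▸ B.min'_mem _
    have : P.part x = B := P.part_eq_of_mem hB hxB
    rw [this] at hb
    exact hmin ▸ B.min'_le b hb
  · intro h
    have hpm := P.part_mem.mpr (mem_univ x)
    have hne := P.nonempty_of_mem_parts hpm
    refine mem_minset.mpr ⟨P.part x, hpm, ?_⟩
    exact le_antisymm (min'_le _ _ (P.mem_part (mem_univ x))) (h _ (min'_mem _ _))

lemma prev_spec {P : Finpartition (Finset.univ : Finset (Fin m))}
    (hnc : IsNoncrossing P) (hm : Mono P) (hcard : 2 * P.parts.card = m + 2)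
    {x : Fin m} (hx : x ∉ minset P) :
    ∃ p, p ∈ P.part x ∧ p < x ∧ (∀ y ∈ P.part x, y < x → y ≤ p) ∧
      HeightEq (minset P) p x ∧
      ∀ q, p < q → q < x → ¬ HeightEq (minset P) q x := by
  have hpm := P.part_mem.mpr (mem_univ x)
  have hxpart := P.mem_part (mem_univ x)
  have hDne : ((P.part x) ∩ Iio x).Nonempty := by
    rw [mem_minset_iff_min] at hx
    push_neg at hx
    obtain ⟨b, hb, hbx⟩ := hx
    exact ⟨b, mem_inter.mpr ⟨hb, mem_Iio.mpr hbx⟩⟩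
  set p := ((P.part x) ∩ Iio x).max' hDne with hp
  have hpD : p ∈ (P.part x) ∩ Iio x := max'_mem _ _
  have hppart : p ∈ P.part x := (mem_inter.mp hpD).1
  have hpx : p < x := mem_Iio.mp (mem_inter.mp hpD).2
  have hpmax : ∀ y ∈ P.part x, y < x → y ≤ p := fun y hy hyx =>
    le_max' _ y (mem_inter.mpr ⟨hy, mem_Iio.mpr hyx⟩)
  have hcons : ∀ b ∈ P.part x, ¬(p < b ∧ b < x) := by
    rintro b hb ⟨h1, h2⟩
    exact absurd (hpmax b hb h2) (not_le.2 h1)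
  have hgapEq := gap_eq_global hnc hm hcard hpm hppart hxpart hpx hcons
  have hgub := gap_ub hnc hpm hppart hxpart hcons
  have hgapA : 2 * ((minset P) ∩ Ioo p x).card = (Ioo p x).card + 1 := by
    rw [minset_inter_card fun B hB hne => ?_]
    · exact hgapEq
    · exact hgub B hB hne (B.min'_mem _)
  have hxA : ∀ z ∈ minset P, z ∈ Ioc p x → z ∈ Ioo p x := by
    intro z hz hz'
    have : (minset P) ∩ Ioc p x = minset P ∩ Ioo p x := inter_Ioc_card_of_not_mem hx
    have := mem_inter.mpr ⟨hz, hz'⟩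
    rw [inter_Ioc_card_of_not_mem hx] at this
    exact (mem_inter.mp this).2
  refine ⟨p, hppart, hpx, hpmax, ?_, ?_⟩
  · rw [HeightEq]
    have e1 := inter_card_split (minset P) hpx.le
    have e2 : (minset P ∩ Ioc p x) = minset P ∩ Ioo p x := inter_Ioc_card_of_not_mem hx
    have e3 := card_Iic_split hpx.le
    have e4 := card_Ioc_eq hpx
    rw [e2] at e1
    omega
  · intro q hpq hqx hH
    have hHp : HeightEq (minset P) p x := by
      rw [HeightEq]
      have e1 := inter_card_split (minset P) hpx.le
      have e2 : (minset P ∩ Ioc p x) = minset P ∩ Ioo p x := inter_Ioc_card_of_not_mem hx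
      have e3 := card_Iic_split hpx.le
      have e4 := card_Ioc_eq hpx
      rw [e2] at e1
      omega
    have hprefA : (Ioc p q).card + 1 ≤ 2 * ((minset P) ∩ Ioc p q).card := by
      rw [minset_inter_card fun B hB hne => ?_]
      · apply lb2r hnc hm
        · intro a b c ha hc hab hbc
          rw [mem_Ioc] at *
          exact ⟨lt_of_lt_of_le ha.1 hab, le_trans hbc hc.2⟩
        · intro B hB hne b hb
          obtain ⟨b₀, hb₀⟩ := hne
          rw [mem_inter, mem_Ioc] at hb₀
          have hBsub : B ⊆ Ioo p x := hgub B hB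
            ⟨b₀, mem_inter.mpr ⟨hb₀.1, mem_Ioo.mpr
              ⟨hb₀.2.1, lt_of_le_of_lt hb₀.2.2 hqx⟩⟩⟩
          have hbIoo := mem_Ioo.mp (hBsub hb)
          rcases le_or_gt b q with h | h
          · exact Or.inl (mem_Ioc.mpr ⟨hbIoo.1, h⟩)
          · exact Or.inr fun s hs => lt_of_le_of_lt (mem_Ioc.mp hs).2 h
        · exact ⟨q, mem_Ioc.mpr ⟨hpq, le_rfl⟩⟩
      · -- min of block meeting Ioc p q lies in Ioc p q
        obtain ⟨b₀, hb₀⟩ := hne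
        rw [mem_inter, mem_Ioc] at hb₀
        have hBsub : B ⊆ Ioo p x := hgub B hB
          ⟨b₀, mem_inter.mpr ⟨hb₀.1, mem_Ioo.mpr
            ⟨hb₀.2.1, lt_of_le_of_lt hb₀.2.2 hqx⟩⟩⟩
        have h1 := mem_Ioo.mp (hBsub (B.min'_mem (P.nonempty_of_mem_parts hB)))
        have h2 : B.min' (P.nonempty_of_mem_parts hB) ≤ b₀ := B.min'_le _ hb₀.1
        exact mem_Ioc.mpr ⟨h1.1, le_trans h2 hb₀.2.2⟩
    rw [HeightEq] at hH hHp
    have e1 := inter_card_split (minset P) hpq.le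
    have e2 := card_Iic_split hpq.le
    omega

lemma heighteq_unique {A : Finset (Fin m)} {x p p' : Fin m}
    (h1 : p < x) (h2 : HeightEq A p x) (h3 : ∀ q, p < q → q < x → ¬ HeightEq A q x)
    (h1' : p' < x) (h2' : HeightEq A p' x)
    (h3' : ∀ q, p' < q → q < x → ¬ HeightEq A q x) : p = p' := by
  rcases lt_trichotomy p p' with h | h | h
  · exact absurd h2' (h3 p' h h1')
  · exact h
  · exact absurd h2 (h3' p h h1)

lemma part_subset_part {P Q : Finpartition (Finset.univ : Finset (Fin m))}
    (hncP : IsNoncrossing P) (hmP : Mono P) (hcardP : 2 * P.parts.card = m + 2)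
    (hncQ : IsNoncrossing Q) (hmQ : Mono Q) (hcardQ : 2 * Q.parts.card = m + 2)
    (hA : minset P = minset Q) :
    ∀ x y : Fin m, y ∈ P.part x → y ∈ Q.part x := by
  have key : ∀ k : ℕ, ∀ x y : Fin m, (x : ℕ) = k → y ≤ x → y ∈ P.part x → y ∈ Q.part x := by
    intro k
    induction k using Nat.strong_induction_on with
    | _ k ih =>
    intro x y hxk hyx hyPx
    rcases eq_or_lt_of_le hyx with heq | hlt
    · rw [heq]
      exact Q.mem_part (mem_univ x)
    · have hxA : x ∉ minset P := by
        rw [mem_minset_iff_min]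
        push_neg
        exact ⟨y, hyPx, hlt⟩
      obtain ⟨p, hpPart, hpx, hpmax, hpH, hpU⟩ := prev_spec hncP hmP hcardP hxA
      obtain ⟨q, hqPart, hqx, hqmax, hqH, hqU⟩ := prev_spec hncQ hmQ hcardQ (hA ▸ hxA)
      rw [← hA] at hqH hqU
      have hpq : p = q := heighteq_unique hpx hpH hpU hqx hqH hqU
      subst hpq
      have hyp : y ≤ p := hpmax y hyPx hlt
      rcases eq_or_lt_of_le hyp with heq2 | hlt2
      · rw [heq2]
        exact hqPart
      · have hPpx : P.part p = P.part x := P.part_eq_of_mem (P.part_mem.mpr (mem_univ x)) hpPart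
        have hQpx : Q.part p = Q.part x := Q.part_eq_of_mem (Q.part_mem.mpr (mem_univ x)) hqPart
        have hyPp : y ∈ P.part p := hPpx ▸ hyPx
        have := ih (p : ℕ) (by omega) p y rfl hyp hyPp
        exact hQpx ▸ this
  intro x y hyPx
  rcases le_or_gt y x with h | h
  · exact key (x : ℕ) x y rfl h hyPx
  · have hPyx : P.part y = P.part x := P.part_eq_of_mem (P.part_mem.mpr (mem_univ x)) hyPx
    have hxPy : x ∈ P.part y := hPyx ▸ P.mem_part (mem_univ x)
    have := key (y : ℕ) y x rfl h.le hxPy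
    have hQxy : Q.part x = Q.part y := Q.part_eq_of_mem (Q.part_mem.mpr (mem_univ y)) this
    exact hQxy ▸ Q.mem_part (mem_univ y)

lemma minset_inj {P Q : Finpartition (Finset.univ : Finset (Fin m))}
    (hncP : IsNoncrossing P) (hmP : Mono P) (hcardP : 2 * P.parts.card = m + 2)
    (hncQ : IsNoncrossing Q) (hmQ : Mono Q) (hcardQ : 2 * Q.parts.card = m + 2)
    (hA : minset P = minset Q) : P = Q := by
  have h1 := part_subset_part hncP hmP hcardP hncQ hmQ hcardQ hA
  have h2 := part_subset_part hncQ hmQ hcardQ hncP hmP hcardP hA.symm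
  have hpartseq : ∀ b : Fin m, P.part b = Q.part b := by
    intro b
    ext z
    exact ⟨h1 b z, h2 b z⟩
  apply Finpartition.ext
  ext B
  constructor
  · intro hB
    obtain ⟨b, hb⟩ := P.nonempty_of_mem_parts hB
    have : B = Q.part b := by
      rw [← hpartseq b, P.part_eq_of_mem hB hb]
    rw [this]
    exact Q.part_mem.mpr (mem_univ b)
  · intro hB
    obtain ⟨b, hb⟩ := Q.nonempty_of_mem_parts hB
    have : B = P.part b := by
      rw [hpartseq b, Q.part_eq_of_mem hB hb]
    rw [this]
    exact P.part_mem.mpr (mem_univ b)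

noncomputable def wgt (P : Finpartition (Finset.univ : Finset (Fin m))) : ℕ :=
  ∑ a ∈ minset P, (a : ℕ)

lemma conc_self {n : ℕ} (P : Finpartition (Finset.univ : Finset (Fin (2 * n)))) :
    Concordant (minset P) P := by
  intro B hB
  have : minset P ∩ B = {B.min' (P.nonempty_of_mem_parts hB)} := by
    ext a
    rw [mem_inter, mem_singleton]
    constructor
    · rintro ⟨ha, haB⟩
      obtain ⟨B', hB', hmin⟩ := mem_minset.mp ha
      have haB' : a ∈ B' := hmin ▸ B'.min'_mem _
      have hBB' : B' = B := eq_of_mem_two hB' hB haB' haB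
      subst hBB'
      exact hmin.symm
    · rintro rfl
      exact ⟨min'_mem_minset hB, B.min'_mem _⟩
  rw [this, card_singleton]

lemma kreweras_hcard {n : ℕ} {P : Finpartition (Finset.univ : Finset (Fin (2 * n)))}
    (hK : IsKrewerasPair P) : 2 * P.parts.card = 2 * n + 2 := by
  rw [hK.2.2]; ring

lemma wgt_lt {n : ℕ} {P Q : Finpartition (Finset.univ : Finset (Fin (2 * n)))}
    (hP : IsKrewerasPair P) (hQ : IsKrewerasPair Q)
    (hconc : Concordant (minset P) Q) (hne : Q ≠ P) : wgt Q < wgt P := by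
  set A := minset P with hA
  -- some block of Q has its min outside A
  have hex : ∃ B, ∃ hB : B ∈ Q.parts, B.min' (Q.nonempty_of_mem_parts hB) ∉ A := by
    by_contra h
    push_neg at h
    have hsub : minset Q ⊆ A := by
      intro a ha
      obtain ⟨B, hB, hmin⟩ := mem_minset.mp ha
      exact hmin ▸ h B hB
    have hcards : A.card ≤ (minset Q).card := by
      rw [card_minset, card_minset, hP.2.2, hQ.2.2]
    have : minset Q = A := eq_of_subset_of_card_le hsub hcards
    exact hne (minset_inj hQ.1 hQ.2.1 (kreweras_hcard hQ) hP.1 hP.2.1 (kreweras_hcard hP) this)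
  -- A decomposes over the blocks of Q
  have hbiU : A = Q.parts.biUnion fun B => A ∩ B := by
    ext a
    rw [mem_biUnion]
    constructor
    · intro ha
      obtain ⟨B, hB, haB⟩ := Q.exists_mem (mem_univ a)
      exact ⟨B, hB, mem_inter.mpr ⟨ha, haB⟩⟩
    · rintro ⟨B, hB, haB⟩
      exact (mem_inter.mp haB).1
  have hdisjQ : (Q.parts : Set (Finset (Fin (2 * n)))).PairwiseDisjoint
      fun B => A ∩ B := by
    intro B hB B' hB' hne'
    exact Disjoint.mono inter_subset_right inter_subset_right
      (Q.disjoint hB hB' hne')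
  have hwP : wgt P = ∑ B ∈ Q.parts.attach, ∑ a ∈ A ∩ B.1, (a : ℕ) := by
    rw [wgt, ← hA]
    nth_rewrite 1 [hbiU]
    rw [sum_biUnion hdisjQ, ← Finset.sum_attach Q.parts (fun B => ∑ a ∈ A ∩ B, (a : ℕ))]
  have hwQ : wgt Q = ∑ B ∈ Q.parts.attach,
      ((B.1.min' (Q.nonempty_of_mem_parts B.2) : Fin (2 * n)) : ℕ) := by
    rw [wgt, minset, sum_image]
    intro B _ B' _ h
    simp only at h
    apply Subtype.ext
    apply eq_of_mem_two B.2 B'.2 (a := B'.1.min' (Q.nonempty_of_mem_parts B'.2))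
    · rw [← h]
      exact B.1.min'_mem _
    · exact B'.1.min'_mem _
  rw [hwP, hwQ]
  obtain ⟨B₀, hB₀, hB₀min⟩ := hex
  apply Finset.sum_lt_sum
  · intro B _
    obtain ⟨a, ha⟩ := card_eq_one.mp (hconc B.1 B.2)
    rw [ha, sum_singleton]
    have haB : a ∈ B.1 := (mem_inter.mp (ha ▸ mem_singleton_self a : a ∈ A ∩ B.1)).2
    exact_mod_cast Fin.le_def.mp (B.1.min'_le a haB)
  · refine ⟨⟨B₀, hB₀⟩, mem_attach _ _, ?_⟩
    obtain ⟨a, ha⟩ := card_eq_one.mp (hconc B₀ hB₀)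
    rw [ha, sum_singleton]
    have hamem : a ∈ A ∩ B₀ := ha ▸ mem_singleton_self a
    have haB : a ∈ B₀ := (mem_inter.mp hamem).2
    have haA : a ∈ A := (mem_inter.mp hamem).1
    have hlt : B₀.min' (Q.nonempty_of_mem_parts hB₀) < a :=
      lt_of_le_of_ne (B₀.min'_le a haB) (fun h => hB₀min (h ▸ haA))
    exact_mod_cast Fin.lt_def.mp hlt

noncomputable def phi (n : ℕ) (A : Finset (Fin (2 * n))) (hA : A.card = n + 1) :
    ExteriorAlgebra ℝ (Fin (2 * n) → ℝ) →ₗ[ℝ] ℝ :=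
  ExteriorAlgebra.liftAlternating
    (Function.update (fun _ => 0) (n + 1)
      ((Matrix.detRowAlternating : (Fin (n + 1) → ℝ) [⋀^Fin (n + 1)]→ₗ[ℝ] ℝ).compLinearMap
        (LinearMap.funLeft ℝ ℝ (fun i => (A.orderIsoOfFin hA i : Fin (2 * n))))))

lemma phi_ιMulti (n : ℕ) (A : Finset (Fin (2 * n))) (hA : A.card = n + 1)
    (v : Fin (n + 1) → (Fin (2 * n) → ℝ)) :
    phi n A hA (ExteriorAlgebra.ιMulti ℝ (n + 1) v) =
      Matrix.det (Matrix.of fun j i => v j (A.orderIsoOfFin hA i : Fin (2 * n))) := by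
  rw [phi, ExteriorAlgebra.liftAlternating_apply_ιMulti, Function.update_self]
  rfl

lemma phi_eWedge (n : ℕ) (A A' : Finset (Fin (2 * n))) (hA : A.card = n + 1)
    (hA' : A'.card = n + 1) :
    phi n A hA (eWedge n A' hA') = if A = A' then 1 else 0 := by
  rw [eWedge, phi_ιMulti]
  have hentry : ∀ j i, (Matrix.of fun j i =>
      (Pi.single (M := fun _ => ℝ) ((A'.orderIsoOfFin hA' j : Fin (2 * n))) (1 : ℝ))
        ((A.orderIsoOfFin hA i : Fin (2 * n)))) j i =
      if (A.orderIsoOfFin hA i : Fin (2 * n)) = (A'.orderIsoOfFin hA' j : Fin (2 * n))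
        then (1 : ℝ) else 0 := by
    intro j i
    simp [Matrix.of_apply, Pi.single_apply]
    congr
  split_ifs with heq
  · subst heq
    have : (Matrix.of fun j i =>
        (Pi.single (M := fun _ => ℝ) ((A.orderIsoOfFin hA j : Fin (2 * n))) (1 : ℝ))
          ((A.orderIsoOfFin hA i : Fin (2 * n)))) = (1 : Matrix (Fin (n + 1)) (Fin (n + 1)) ℝ) := by
      ext j i
      rw [hentry j i, Matrix.one_apply]
      by_cases h : (A.orderIsoOfFin hA i : Fin (2 * n)) = (A.orderIsoOfFin hA j : Fin (2 * n))
      · have hij : i = j := (A.orderIsoOfFin hA).injective (Subtype.ext h)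
        rw [if_pos h, if_pos hij.symm]
      · rw [if_neg h, if_neg fun hji => h (by subst hji; rfl)]
    rw [this, Matrix.det_one]
  · -- some element of A is not in A'
    have hnsub : ¬ A ⊆ A' := by
      intro hsub
      exact heq (eq_of_subset_of_card_le hsub (by omega))
    obtain ⟨a, haA, haA'⟩ := not_subset.mp hnsub
    obtain ⟨i₀, hi₀⟩ := (A.orderIsoOfFin hA).surjective ⟨a, haA⟩
    apply Matrix.det_eq_zero_of_column_eq_zero i₀
    intro j
    rw [hentry j i₀]
    rw [if_neg]
    intro h
    apply haA'
    rw [hi₀] at h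
    simp only at h
    rw [h]
    exact (A'.orderIsoOfFin hA' j).2

lemma phi_fSigma (n : ℕ) (A : Finset (Fin (2 * n))) (hA : A.card = n + 1)
    (Q : Finpartition (Finset.univ : Finset (Fin (2 * n)))) :
    phi n A hA (fSigma n Q) = if Concordant A Q then 1 else 0 := by
  rw [fSigma, map_sum]
  have hAmem : A ∈ (Finset.univ : Finset (Fin (2 * n))).powersetCard (n + 1) :=
    mem_powersetCard.mpr ⟨subset_univ A, hA⟩
  rw [Finset.sum_eq_single_of_mem (⟨A, hAmem⟩ :
      {x // x ∈ (Finset.univ : Finset (Fin (2 * n))).powersetCard (n + 1)})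
      (mem_attach _ _)]
  · split_ifs with hc
    · rw [phi_eWedge, if_pos rfl]
    · rw [map_zero]
  · intro b _ hb
    split_ifs with hc
    · rw [phi_eWedge, if_neg]
      intro h
      exact hb (Subtype.ext h.symm)
    · rw [map_zero]

end Lam

open Lam in
/-- The vectors f_σ, as σ ranges over the noncrossing partitions of [n]
(equivalently, over the Kreweras pairs (σ, σ̃)), are linearly independent in
Λ^{n+1}(ℝ^{2n}). -/
theorem fSigma_linearIndependent (n : ℕ) :
    LinearIndependent ℝ
      (fun P : {P : Finpartition (Finset.univ : Finset (Fin (2 * n))) //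
          IsKrewerasPair P} => fSigma n P.1) := by
  rw [linearIndependent_iff']
  intro s g hsum
  suffices H : ∀ k : ℕ, ∀ i ∈ s, wgt i.1 = k → g i = 0 by
    intro i hi
    exact H (wgt i.1) i hi rfl
  intro k
  induction k using Nat.strong_induction_on with
  | _ k ih =>
  intro i hi hk
  have hK := i.2
  have hA : (minset i.1).card = n + 1 := by rw [card_minset, hK.2.2]
  have happ := congrArg (phi n (minset i.1) hA) hsum
  rw [map_sum, map_zero] at happ
  have hterm : ∀ j ∈ s, phi n (minset i.1) hA (g j • fSigma n j.1) =
      g j * (if Concordant (minset i.1) j.1 then 1 else 0) := by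
    intro j _
    rw [map_smul, phi_fSigma, smul_eq_mul]
  rw [Finset.sum_congr rfl hterm] at happ
  have hz : ∀ j ∈ s, j ≠ i →
      g j * (if Concordant (minset i.1) j.1 then 1 else 0) = 0 := by
    intro j hj hji
    by_cases hc : Concordant (minset i.1) j.1
    · have hlt : wgt j.1 < wgt i.1 :=
        wgt_lt i.2 j.2 hc (fun h => hji (Subtype.ext h))
      rw [ih (wgt j.1) (by omega) j hj rfl, zero_mul]
    · rw [if_neg hc, mul_zero]
  rw [Finset.sum_eq_single_of_mem i hi hz, if_pos (conc_self i.1), mul_one] at happ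
  exact happ
end

section
/- Let M be the (n+1)×2n matrix with first row (0,1,0,1,...,0,1) and, for 1 ≤ i ≤ n, row i+1 having a 1 in column 2i-1, the entry S_{ij} in column 2j, and zeros in the other odd columns. Then all rows of M are pairwise isotropic for the form Omega^D if and only if the n×n matrix with (i,j) entry S_{j(i-1)} - S_{ji} (indices of S periodic mod n) is symmetric. -/
/-- Index i-1 taken mod n. -/
def prevIdx {n : ℕ} (i : Fin n) : Fin n :=
  ⟨((i : ℕ) + n - 1) % n, Nat.mod_lt _ i.pos⟩

/-- Row i+1 of the Schubert chart matrix: e_i + ∑_j S_{ij} e_{j̃}. -/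
def rowS {n : ℕ} (S : Matrix (Fin n) (Fin n) ℝ) (i : Fin n) : Fin (2 * n) → ℝ :=
  fun k =>
    if (k : ℕ) = 2 * (i : ℕ) then 1
    else if h : (k : ℕ) % 2 = 1 then S i ⟨(k : ℕ) / 2, by omega⟩ else 0

-- nat helpers
lemma succ_mod_char {n k : ℕ} (hk : k < n) :
    (k + 1) % n = if k + 1 = n then 0 else k + 1 := by
  split
  · next h => rw [h, Nat.mod_self]
  · exact Nat.mod_eq_of_lt (by omega)

lemma prev_succ' {n : ℕ} (j : Fin n) : (((j : ℕ) + n - 1) % n + 1) % n = (j:ℕ) := by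
  have hn : 0 < n := j.pos
  rcases Nat.eq_zero_or_pos (j : ℕ) with h0 | h0
  · have h1 : ((j:ℕ) + n - 1) % n = n - 1 := by
      rw [h0, Nat.zero_add]; exact Nat.mod_eq_of_lt (by omega)
    have h2 : n - 1 + 1 = n := by omega
    rw [h1, h2, Nat.mod_self, h0]
  · have h1 : ((j:ℕ) + n - 1) % n = (j:ℕ) - 1 := by
      have hj : (j:ℕ) + n - 1 = ((j:ℕ) - 1) + n := by omega
      rw [hj, Nat.add_mod_right]; exact Nat.mod_eq_of_lt (by omega)
    have h2 : (j:ℕ) - 1 + 1 = (j:ℕ) := by omega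
    rw [h1, h2]; exact Nat.mod_eq_of_lt j.is_lt

lemma succ_mod_inj {n k k' : ℕ} (hk : k < n) (hk' : k' < n)
    (h : (k + 1) % n = (k' + 1) % n) : k = k' := by
  rw [succ_mod_char hk, succ_mod_char hk'] at h
  split at h <;> split at h <;> omega

-- coordinates of row0
lemma unm_row0 {n : ℕ} (k : ℕ) (hk : k < n) :
    unmCoord (fun k : Fin (2 * n) => if (k : ℕ) % 2 = 1 then (1:ℝ) else 0) k = 0 := by
  rw [unmCoord, dif_pos (by omega)]
  simp [Nat.mul_mod_right]

lemma tld_row0 {n : ℕ} (k : ℕ) (hk : k < n) :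
    tldCoord (fun k : Fin (2 * n) => if (k : ℕ) % 2 = 1 then (1:ℝ) else 0) k = 1 := by
  rw [tldCoord, dif_pos (by omega)]
  simp [Nat.mul_add_mod]

lemma unm_rowS {n : ℕ} (S : Matrix (Fin n) (Fin n) ℝ) (i : Fin n) (k : ℕ) (hk : k < n) :
    unmCoord (rowS S i) k = if k = (i : ℕ) then 1 else 0 := by
  rw [unmCoord, dif_pos (by omega), rowS]
  simp only
  split
  · next h => rw [if_pos (by omega)]
  · next h => rw [if_neg (by omega), dif_neg (by omega)]

lemma tld_rowS {n : ℕ} (S : Matrix (Fin n) (Fin n) ℝ) (i : Fin n) (k : ℕ) (hk : k < n) :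
    tldCoord (rowS S i) k = S i ⟨k, hk⟩ := by
  rw [tldCoord, dif_pos (by omega), rowS]
  simp only
  rw [if_neg (by omega), dif_pos (by omega)]
  exact congrArg (S i) (Fin.ext (show (2 * k + 1) / 2 = k by omega))

lemma sum_delta {n : ℕ} (j : Fin n) (f : ℕ → ℝ) :
    ∑ k ∈ Finset.range n, (if k = (j : ℕ) then f k else 0) = f (j : ℕ) := by
  rw [Finset.sum_ite_eq' (Finset.range n) ((j : ℕ)) f,
    if_pos (Finset.mem_range.mpr j.is_lt)]

lemma sum_delta_succ {n : ℕ} (j : Fin n) (f : ℕ → ℝ) :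
    ∑ k ∈ Finset.range n, (if (k + 1) % n = (j : ℕ) then f k else 0) =
      f ((prevIdx j : ℕ)) := by
  rw [Finset.sum_eq_single ((prevIdx j : ℕ))]
  · exact if_pos (prev_succ' j)
  · intro k hk hne
    rw [if_neg]
    intro hEq
    exact hne (succ_mod_inj (Finset.mem_range.mp hk) (prevIdx j).is_lt
      (hEq.trans (prev_succ' j).symm))
  · intro hc
    exact absurd (Finset.mem_range.mpr (prevIdx j).is_lt) hc

lemma OmegaD_self (n : ℕ) (x : Fin (2 * n) → ℝ) : OmegaD n x x = 0 := by
  rw [OmegaD,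
    Finset.sum_congr rfl (fun k _ =>
      show unmCoord x k * tldCoord x k - tldCoord x k * unmCoord x k = 0 by ring),
    Finset.sum_congr rfl (fun k _ =>
      show tldCoord x k * unmCoord x ((k+1) % n) - unmCoord x ((k+1) % n) * tldCoord x k = 0
        by ring)]
  simp

lemma OmegaD_skew (n : ℕ) (x y : Fin (2 * n) → ℝ) : OmegaD n x y = - OmegaD n y x := by
  rw [OmegaD, OmegaD, neg_add]
  congr 1 <;> rw [← Finset.sum_neg_distrib] <;>
    exact Finset.sum_congr rfl fun k _ => by ring

lemma omega_row0_rowS {n : ℕ} (S : Matrix (Fin n) (Fin n) ℝ) (i : Fin n) :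
    OmegaD n (fun k : Fin (2 * n) => if (k : ℕ) % 2 = 1 then (1:ℝ) else 0) (rowS S i) = 0 := by
  have hn : 0 < n := i.pos
  rw [OmegaD]
  have e1 : ∀ k ∈ Finset.range n,
      (unmCoord (fun k : Fin (2 * n) => if (k : ℕ) % 2 = 1 then (1:ℝ) else 0) k *
        tldCoord (rowS S i) k -
       tldCoord (fun k : Fin (2 * n) => if (k : ℕ) % 2 = 1 then (1:ℝ) else 0) k *
        unmCoord (rowS S i) k)
      = -(if k = (i : ℕ) then (1:ℝ) else 0) := by
    intro k hk
    have hk' := Finset.mem_range.mp hk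
    rw [unm_row0 k hk', tld_row0 k hk', unm_rowS S i k hk']
    ring
  have e2 : ∀ k ∈ Finset.range n,
      (tldCoord (fun k : Fin (2 * n) => if (k : ℕ) % 2 = 1 then (1:ℝ) else 0) k *
        unmCoord (rowS S i) ((k + 1) % n) -
       unmCoord (fun k : Fin (2 * n) => if (k : ℕ) % 2 = 1 then (1:ℝ) else 0) ((k + 1) % n) *
        tldCoord (rowS S i) k)
      = (if (k + 1) % n = (i : ℕ) then (1:ℝ) else 0) := by
    intro k hk
    have hk' := Finset.mem_range.mp hk
    have hm : (k + 1) % n < n := Nat.mod_lt _ hn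
    rw [tld_row0 k hk', unm_rowS S i _ hm, unm_row0 _ hm]
    ring
  rw [Finset.sum_congr rfl e1, Finset.sum_congr rfl e2,
    Finset.sum_neg_distrib, sum_delta i (fun _ => (1:ℝ)),
    sum_delta_succ i (fun _ => (1:ℝ))]
  ring

lemma omega_rowS_rowS {n : ℕ} (S : Matrix (Fin n) (Fin n) ℝ) (i j : Fin n) :
    OmegaD n (rowS S i) (rowS S j) =
      (S j i - S i j) + (S i (prevIdx j) - S j (prevIdx i)) := by
  have hn : 0 < n := i.pos
  rw [OmegaD]
  have e1 : ∀ k ∈ Finset.range n,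
      (unmCoord (rowS S i) k * tldCoord (rowS S j) k -
        tldCoord (rowS S i) k * unmCoord (rowS S j) k)
      = (if k = (i : ℕ) then tldCoord (rowS S j) k else 0) -
        (if k = (j : ℕ) then tldCoord (rowS S i) k else 0) := by
    intro k hk
    have hk' := Finset.mem_range.mp hk
    rw [unm_rowS S i k hk', unm_rowS S j k hk']
    split <;> split <;> ring
  have e2 : ∀ k ∈ Finset.range n,
      (tldCoord (rowS S i) k * unmCoord (rowS S j) ((k + 1) % n) -
        unmCoord (rowS S i) ((k + 1) % n) * tldCoord (rowS S j) k)
      = (if (k + 1) % n = (j : ℕ) then tldCoord (rowS S i) k else 0) -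
        (if (k + 1) % n = (i : ℕ) then tldCoord (rowS S j) k else 0) := by
    intro k hk
    have hm : (k + 1) % n < n := Nat.mod_lt _ hn
    rw [unm_rowS S i _ hm, unm_rowS S j _ hm]
    split <;> split <;> ring
  rw [Finset.sum_congr rfl e1, Finset.sum_congr rfl e2,
    Finset.sum_sub_distrib, Finset.sum_sub_distrib,
    sum_delta i (fun k => tldCoord (rowS S j) k),
    sum_delta j (fun k => tldCoord (rowS S i) k),
    sum_delta_succ j (fun k => tldCoord (rowS S i) k),
    sum_delta_succ i (fun k => tldCoord (rowS S j) k),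
    tld_rowS S j (i : ℕ) i.is_lt, tld_rowS S i (j : ℕ) j.is_lt,
    tld_rowS S i ((prevIdx j : ℕ)) (prevIdx j).is_lt,
    tld_rowS S j ((prevIdx i : ℕ)) (prevIdx i).is_lt]


/-- The rows of the Schubert chart matrix M (first row (0,1,0,1,…,0,1) and row
i+1 equal to e_i + ∑_j S_{ij} e_{j̃}) are pairwise Ω^D-isotropic if and only if
the matrix with (i,j) entry S_{j(i-1)} - S_{ji} is symmetric. -/
theorem rows_isotropic_iff_symm (n : ℕ) (S : Matrix (Fin n) (Fin n) ℝ)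
    (M : Fin (n + 1) → Fin (2 * n) → ℝ)
    (hM : M = fun p : Fin (n + 1) =>
      if h : (p : ℕ) = 0
      then (fun k : Fin (2 * n) => if (k : ℕ) % 2 = 1 then (1 : ℝ) else 0)
      else rowS S ⟨(p : ℕ) - 1, by omega⟩) :
    (∀ p q : Fin (n + 1), OmegaD n (M p) (M q) = 0) ↔
      (∀ i j : Fin n,
        S j (prevIdx i) - S j i = S i (prevIdx j) - S i j) := by
  subst hM
  constructor
  · intro h i j
    have hi := h ⟨(i : ℕ) + 1, by omega⟩ ⟨(j : ℕ) + 1, by omega⟩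
    simp only [dif_neg (by omega : ¬ ((i : ℕ) + 1 = 0)),
      dif_neg (by omega : ¬ ((j : ℕ) + 1 = 0))] at hi
    have ei : (⟨(i : ℕ) + 1 - 1, by omega⟩ : Fin n) = i := by
      exact Fin.ext (by simp)
    have ej : (⟨(j : ℕ) + 1 - 1, by omega⟩ : Fin n) = j := by
      exact Fin.ext (by simp)
    rw [ei, ej, omega_rowS_rowS] at hi
    linarith
  · intro h p q
    simp only
    by_cases hp : (p : ℕ) = 0 <;> by_cases hq : (q : ℕ) = 0
    · rw [dif_pos hp, dif_pos hq, OmegaD_self]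
    · rw [dif_pos hp, dif_neg hq, omega_row0_rowS]
    · rw [dif_neg hp, dif_pos hq, OmegaD_skew, omega_row0_rowS, neg_zero]
    · rw [dif_neg hp, dif_neg hq, omega_rowS_rowS]
      have := h ⟨(q : ℕ) - 1, by omega⟩ ⟨(p : ℕ) - 1, by omega⟩
      linarith
end
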